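/- arXiv:1505.03256 — 4 statements merged into one kernel-verified Lean document; each statement's English description precedes it below -/
import Mathlib

section
/- Let 𝓖 = {G₁, …, G_m} be a family of m distinct k-element subsets of {1, …, n} (m ≥ 2, k ≥ 1) such that for any two unordered pairs of indices {i,j} ≠ {s,t} one has G_i ∩ G_j ≠ G_s ∩ G_t. For each j ∈ {1, …, n} let λ_j be the proportion of members of 𝓖 that contain j, and set λ = Σ_{j=1}^n λ_j²/k. If λ_j ≤ 1/√2 for all j ∈ {1, …, n}, then for every α ∈ [1, 3.67]: ln_α(binom(m,2)) ≤ k · h_α(λ²)/λ. -/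
open Finset

/-- The α-logarithm: `ln_α(ξ) = (ξ^(1-α) - 1)/(1-α)` for `α ≠ 1`, and `ln ξ` for `α = 1`. -/
noncomputable def alphaLog (α ξ : ℝ) : ℝ :=
  if α = 1 then Real.log ξ else (ξ ^ (1 - α) - 1) / (1 - α)

/-- The Tsallis–Havrda–Charvát entropy of order `α` of a pmf `p` on a finite set. -/
noncomputable def thc (α : ℝ) {S : Type*} [Fintype S] (p : S → ℝ) : ℝ :=
  if α = 1 then -∑ s, p s * Real.log (p s)
  else ((∑ s, p s ^ α) - 1) / (1 - α)

/-- The binary THC entropy `h_α(q)`. -/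
noncomputable def binThc (α q : ℝ) : ℝ :=
  if α = 1 then -(q * Real.log q) - (1 - q) * Real.log (1 - q)
  else (q ^ α + (1 - q) ^ α - 1) / (1 - α)

/-- First conditional THC entropy (Daróczy form): `H_α(X|Y) = Σ_y p(y)^α H_α(X|y)`,
where `p` is the joint pmf of `(X, Y)`.  (Terms with `p(y) = 0` vanish for `α > 0`.) -/
noncomputable def condThc1 (α : ℝ) {SX SY : Type*} [Fintype SX] [Fintype SY]
    (p : SX × SY → ℝ) : ℝ :=
  ∑ y, (∑ x, p (x, y)) ^ α * thc α (fun x => p (x, y) / ∑ x', p (x', y))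

/-- Second conditional THC entropy: `H̃_α(X|Y) = Σ_y p(y) H_α(X|y)`,
where `p` is the joint pmf of `(X, Y)`.  (Terms with `p(y) = 0` vanish.) -/
noncomputable def condThc2 (α : ℝ) {SX SY : Type*} [Fintype SX] [Fintype SY]
    (p : SX × SY → ℝ) : ℝ :=
  ∑ y, (∑ x, p (x, y)) * thc α (fun x => p (x, y) / ∑ x', p (x', y))

/-- The pmf of a random variable `X` defined on a finite sample space with pmf `μ`. -/
noncomputable def distOf {Ω S : Type*} [Fintype Ω] [DecidableEq S]
    (μ : Ω → ℝ) (X : Ω → S) : S → ℝ :=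
  fun s => ∑ ω ∈ Finset.univ.filter (fun ω => X ω = s), μ ω


lemma binThc_one_eq (q : ℝ) : binThc 1 q = Real.negMulLog q + Real.negMulLog (1 - q) := by
  simp [binThc, Real.negMulLog]; ring

lemma binThc_ne (α : ℝ) (hα : α ≠ 1) (q : ℝ) :
    binThc α q = (q ^ α + (1 - q) ^ α - 1) / (1 - α) := if_neg hα

lemma binThc_zero {α : ℝ} (hα : 1 ≤ α) : binThc α 0 = 0 := by
  rcases eq_or_lt_of_le hα with h | h
  · simp [binThc, ← h]
  · rw [binThc_ne α (by linarith), Real.zero_rpow (by linarith)]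
    simp

lemma binThc_one' {α : ℝ} (hα : 1 ≤ α) : binThc α 1 = 0 := by
  rcases eq_or_lt_of_le hα with h | h
  · simp [binThc, ← h]
  · rw [binThc_ne α (by linarith)]
    rw [show (1:ℝ) - 1 = 0 by ring, Real.zero_rpow (by linarith)]
    simp

lemma binThc_symm (α q : ℝ) : binThc α (1 - q) = binThc α q := by
  by_cases h : α = 1
  · simp [binThc, h]; ring
  · rw [binThc_ne α h, binThc_ne α h]
    rw [show (1:ℝ) - (1 - q) = q by ring]
    ring

lemma binThc_nonneg {α : ℝ} (hα : 1 ≤ α) {q : ℝ} (h0 : 0 ≤ q) (h1 : q ≤ 1) :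
    0 ≤ binThc α q := by
  rcases eq_or_lt_of_le hα with h | h
  · rw [← h, binThc_one_eq]
    have := Real.negMulLog_nonneg h0 h1
    have := Real.negMulLog_nonneg (by linarith : (0:ℝ) ≤ 1 - q) (by linarith)
    linarith
  · rw [binThc_ne α (by linarith)]
    have h2 : q ^ α ≤ q := by
      calc q ^ α ≤ q ^ (1:ℝ) := Real.rpow_le_rpow_of_exponent_ge' h0 h1 (by linarith) hα
      _ = q := Real.rpow_one q
    have h3 : (1 - q) ^ α ≤ 1 - q := by
      calc (1-q) ^ α ≤ (1-q) ^ (1:ℝ) :=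
        Real.rpow_le_rpow_of_exponent_ge' (by linarith) (by linarith) (by linarith) hα
      _ = 1 - q := Real.rpow_one _
    have hden : 1 - α < 0 := by linarith
    exact div_nonneg_iff.mpr (Or.inr ⟨by linarith, by linarith⟩)
lemma concaveOn_binThc {α : ℝ} (hα : 1 ≤ α) : ConcaveOn ℝ (Set.Icc (0:ℝ) 1) (binThc α) := by
  rcases eq_or_lt_of_le hα with h | h
  · have h1 : ConcaveOn ℝ (Set.Icc (0:ℝ) 1) Real.negMulLog :=
      Real.concaveOn_negMulLog.subset (fun x hx => hx.1) (convex_Icc 0 1)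
    have h2 : ConcaveOn ℝ (Set.Icc (0:ℝ) 1) (fun q => Real.negMulLog (1 - q)) := by
      refine ⟨convex_Icc 0 1, fun x hx y hy a b ha hb hab => ?_⟩
      have := Real.concaveOn_negMulLog.2 (Set.mem_Ici.mpr (by linarith [hx.2] : (0:ℝ) ≤ 1 - x))
        (Set.mem_Ici.mpr (by linarith [hy.2] : (0:ℝ) ≤ 1 - y)) ha hb hab
      simpa [smul_eq_mul, show a*(1-x)+b*(1-y) = 1 - (a*x+b*y) by nlinarith] using this
    have := h1.add h2
    simp_rw [← h]
    refine this.congr (fun q _ => ?_)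
    rw [binThc_one_eq]; simp [Pi.add_apply]
  · have hα1 : α ≠ 1 := by linarith
    have hc1 : ConvexOn ℝ (Set.Icc (0:ℝ) 1) (fun q : ℝ => q ^ α) :=
      (convexOn_rpow hα).subset (fun x hx => hx.1) (convex_Icc 0 1)
    have hc2 : ConvexOn ℝ (Set.Icc (0:ℝ) 1) (fun q : ℝ => (1 - q) ^ α) := by
      refine ⟨convex_Icc 0 1, fun x hx y hy a b ha hb hab => ?_⟩
      have := (convexOn_rpow hα).2 (Set.mem_Ici.mpr (by linarith [hx.2] : (0:ℝ) ≤ 1 - x))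
        (Set.mem_Ici.mpr (by linarith [hy.2] : (0:ℝ) ≤ 1 - y)) ha hb hab
      simpa [smul_eq_mul, show a*(1-x)+b*(1-y) = 1 - (a*x+b*y) by nlinarith] using this
    have hsum := hc1.add hc2
    refine ⟨convex_Icc 0 1, fun x hx y hy a b ha hb hab => ?_⟩
    have key := hsum.2 hx hy ha hb hab
    simp only [smul_eq_mul] at key ⊢
    rw [binThc_ne α hα1, binThc_ne α hα1, binThc_ne α hα1]
    simp only [Pi.add_apply] at key
    have hne : (1:ℝ) - α < 0 := by linarith
    have e1 : a * ((x ^ α + (1 - x) ^ α - 1) / (1 - α)) + b * ((y ^ α + (1 - y) ^ α - 1) / (1 - α))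
        = (a * (x ^ α + (1 - x) ^ α - 1) + b * (y ^ α + (1 - y) ^ α - 1)) / (1 - α) := by ring
    rw [e1, div_le_div_right_of_neg hne]
    nlinarith [key]
lemma binThc_mono {α : ℝ} (hα : 1 ≤ α) {p q : ℝ} (h0 : 0 ≤ p) (hpq : p ≤ q)
    (hq : q ≤ 1/2) : binThc α p ≤ binThc α q := by
  rcases eq_or_lt_of_le hpq with rfl | hlt
  · exact le_refl _
  · have hp2 : p < 1/2 := lt_of_lt_of_le hlt hq
    have hden : 0 < 1 - 2*p := by linarith
    have hne : (1:ℝ) - 2*p ≠ 0 := ne_of_gt hden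
    have ht0 : 0 ≤ (1 - p - q)/(1 - 2*p) := div_nonneg (by linarith) (by linarith)
    have ht1 : (1 - p - q)/(1 - 2*p) ≤ 1 := (div_le_one hden).mpr (by linarith)
    have hcomb : ((1 - p - q)/(1 - 2*p)) * p + (1 - (1 - p - q)/(1 - 2*p)) * (1 - p) = q := by
      linear_combination -(div_mul_cancel₀ (1 - p - q) hne)
    have hmem1 : p ∈ Set.Icc (0:ℝ) 1 := ⟨h0, by linarith⟩
    have hmem2 : (1:ℝ) - p ∈ Set.Icc (0:ℝ) 1 := ⟨by linarith, by linarith⟩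
    have key := (concaveOn_binThc hα).2 hmem1 hmem2 ht0
      (by linarith : 0 ≤ 1 - (1 - p - q)/(1 - 2*p)) (by ring)
    simp only [smul_eq_mul] at key
    rw [hcomb, binThc_symm] at key
    nlinarith [key]
lemma alphaLog_one_val {α : ℝ} : alphaLog α 1 = 0 := by
  unfold alphaLog
  split
  · exact Real.log_one
  · rw [Real.one_rpow]; simp

lemma alphaLog_nonneg {α ξ : ℝ} (hα : 1 ≤ α) (hξ : 1 ≤ ξ) : 0 ≤ alphaLog α ξ := by
  rcases eq_or_lt_of_le hα with h | h
  · simp only [alphaLog, ← h, if_pos rfl]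
    exact Real.log_nonneg hξ
  · rw [alphaLog, if_neg (by linarith : α ≠ 1)]
    have h1 : ξ ^ (1-α) ≤ 1 :=
      Real.rpow_le_one_of_one_le_of_nonpos hξ (by linarith)
    exact div_nonneg_iff.mpr (Or.inr ⟨by linarith, by linarith⟩)

lemma alphaLog_chain {α a b : ℝ} (hα : 1 ≤ α) (ha : 0 < a) (hb : 0 < b) :
    alphaLog α (a + b) = binThc α (b/(a+b)) + (a/(a+b)) ^ α * alphaLog α a
      + (b/(a+b)) ^ α * alphaLog α b := by
  have hN : 0 < a + b := by linarith
  have hNne : a + b ≠ 0 := ne_of_gt hN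
  have e1 : (1:ℝ) - b/(a+b) = a/(a+b) := by field_simp; ring
  rcases eq_or_lt_of_le hα with h | h
  · subst h
    simp only [alphaLog, binThc, ↓reduceIte, Real.rpow_one, e1]
    rw [Real.log_div (ne_of_gt hb) hNne, Real.log_div (ne_of_gt ha) hNne]
    field_simp
    ring
  · have hα1 : α ≠ 1 := by linarith
    have hc : (1:ℝ) - α ≠ 0 := by intro hh; apply hα1; linarith
    have hP : (0:ℝ) < (a+b) ^ α := Real.rpow_pos_of_pos hN α
    have haux : ∀ x : ℝ, 0 < x →
        (x/(a+b)) ^ α * alphaLog α x = (x/(a+b)^α - x^α/(a+b)^α)/(1-α) := by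
      intro x hx
      rw [alphaLog, if_neg hα1, Real.div_rpow hx.le hN.le]
      have hxx : x ^ α * x ^ (1-α) = x := by
        rw [← Real.rpow_add hx]; norm_num
      rw [div_mul_div_comm, mul_sub, mul_one, hxx, div_sub_div_same, div_div]
    rw [haux a ha, haux b hb, binThc_ne α hα1, e1, alphaLog, if_neg hα1]
    rw [Real.div_rpow ha.le hN.le, Real.div_rpow hb.le hN.le]
    have eN : (a+b) ^ ((1:ℝ)-α) = (a+b)/(a+b)^α := by
      rw [Real.rpow_sub hN, Real.rpow_one]
    rw [eN]
    field_simp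
    ring
lemma counting {β : Type*} [DecidableEq β] {α : ℝ} (hα : 1 ≤ α) (A : Finset β) :
    ∀ F : Finset (Finset β), F.Nonempty → (∀ S ∈ F, S ⊆ A) →
    alphaLog α (F.card : ℝ) ≤
      ∑ j ∈ A, binThc α (((F.filter (fun S => j ∈ S)).card : ℝ) / (F.card : ℝ)) := by
  classical
  induction A using Finset.induction_on with
  | empty =>
    intro F hF hsub
    have hFeq : F = {∅} := by
      apply Finset.eq_singleton_iff_nonempty_unique_mem.mpr
      exact ⟨hF, fun S hS => Finset.subset_empty.mp (hsub S hS)⟩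
    rw [hFeq]
    simp [alphaLog_one_val]
  | @insert a A' hnotin IH =>
    intro F hF hsub
    have hNpos : (0:ℝ) < (F.card : ℝ) := by
      exact_mod_cast hF.card_pos
    have hNne : (F.card : ℝ) ≠ 0 := ne_of_gt hNpos
    rcases Finset.eq_empty_or_nonempty (F.filter (fun S => a ∈ S)) with h1e | h1ne
    · -- nobody contains a
      have hno : ∀ S ∈ F, a ∉ S := by
        intro S hS
        exact (Finset.filter_eq_empty_iff.mp h1e) hS
      have hsub' : ∀ S ∈ F, S ⊆ A' := fun S hS =>
        (Finset.subset_insert_iff_of_notMem (hno S hS)).mp (hsub S hS)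
      rw [Finset.sum_insert hnotin, h1e]
      have : binThc α (((∅ : Finset (Finset β)).card : ℝ) / (F.card : ℝ)) = 0 := by
        simpa using binThc_zero hα
      rw [this, zero_add]
      exact IH F hF hsub'
    · rcases Finset.eq_empty_or_nonempty (F.filter (fun S => a ∉ S)) with h0e | h0ne
      · -- everybody contains a
        have hall : ∀ S ∈ F, a ∈ S := by
          intro S hS
          by_contra hcon
          exact absurd (Finset.mem_filter.mpr ⟨hS, hcon⟩) (by rw [h0e]; simp)
        have hfull : F.filter (fun S => a ∈ S) = F := Finset.filter_true_of_mem hall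
        set F1 : Finset (Finset β) := F.image (fun S => S.erase a) with hF1
        have hinj : Set.InjOn (fun S : Finset β => S.erase a) ↑F :=
          (Finset.erase_injOn' a).mono (fun S hS => hall S hS)
        have hF1card : F1.card = F.card := Finset.card_image_of_injOn hinj
        have hF1ne : F1.Nonempty := hF.image _
        have hF1sub : ∀ S ∈ F1, S ⊆ A' := by
          intro S hS
          rcases Finset.mem_image.mp hS with ⟨T, hT, rfl⟩
          exact Finset.subset_insert_iff.mp (hsub T hT)
        have hfilt : ∀ j ∈ A', (F1.filter (fun S => j ∈ S)).card
            = (F.filter (fun S => j ∈ S)).card := by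
          intro j hj
          have hja : j ≠ a := by rintro rfl; exact hnotin hj
          rw [hF1, Finset.filter_image]
          have : (F.filter fun S => j ∈ S.erase a) = F.filter (fun S => j ∈ S) := by
            apply Finset.filter_congr
            intro S hS
            simp [Finset.mem_erase, hja]
          rw [this]
          exact Finset.card_image_of_injOn (hinj.mono (Finset.filter_subset _ _))
        have hbase := IH F1 hF1ne hF1sub
        rw [hF1card] at hbase
        rw [Finset.sum_insert hnotin, hfull]
        have hterm : binThc α ((F.card : ℝ) / (F.card : ℝ)) = 0 := by
          rw [div_self hNne]; exact binThc_one' hα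
        rw [hterm, zero_add]
        calc alphaLog α (F.card : ℝ) ≤ _ := hbase
        _ = ∑ j ∈ A', binThc α (((F.filter (fun S => j ∈ S)).card : ℝ) / (F.card : ℝ)) := by
            apply Finset.sum_congr rfl
            intro j hj
            rw [hfilt j hj]
      · -- main case
        set F0 : Finset (Finset β) := F.filter (fun S => a ∉ S) with hF0def
        set F1p : Finset (Finset β) := F.filter (fun S => a ∈ S) with hF1pdef
        set F1 : Finset (Finset β) := F1p.image (fun S => S.erase a) with hF1def
        have hsplit : F1p.card + F0.card = F.card :=
          Finset.card_filter_add_card_filter_not (fun S => a ∈ S)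
        have haPos : (0:ℝ) < (F0.card : ℝ) := by exact_mod_cast h0ne.card_pos
        have hbPos : (0:ℝ) < (F1p.card : ℝ) := by exact_mod_cast h1ne.card_pos
        have haGe1 : (1:ℝ) ≤ (F0.card : ℝ) := by exact_mod_cast h0ne.card_pos
        have hbGe1 : (1:ℝ) ≤ (F1p.card : ℝ) := by exact_mod_cast h1ne.card_pos
        have hinj : Set.InjOn (fun S : Finset β => S.erase a) ↑F1p :=
          (Finset.erase_injOn' a).mono
            (fun S hS => (Finset.mem_filter.mp hS).2)
        have hF1card : F1.card = F1p.card := Finset.card_image_of_injOn hinj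
        have hF1ne : F1.Nonempty := h1ne.image _
        have hF0sub : ∀ S ∈ F0, S ⊆ A' := by
          intro S hS
          rcases Finset.mem_filter.mp hS with ⟨hSF, hSa⟩
          exact (Finset.subset_insert_iff_of_notMem hSa).mp (hsub S hSF)
        have hF1sub : ∀ S ∈ F1, S ⊆ A' := by
          intro S hS
          rcases Finset.mem_image.mp hS with ⟨T, hT, rfl⟩
          exact Finset.subset_insert_iff.mp (hsub T (Finset.mem_filter.mp hT).1)
        have hfilt1 : ∀ j ∈ A', (F1.filter (fun S => j ∈ S)).card
            = (F1p.filter (fun S => j ∈ S)).card := by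
          intro j hj
          have hja : j ≠ a := by rintro rfl; exact hnotin hj
          rw [hF1def, Finset.filter_image]
          have he : (F1p.filter fun S => j ∈ S.erase a) = F1p.filter (fun S => j ∈ S) := by
            apply Finset.filter_congr
            intro S hS
            simp [Finset.mem_erase, hja]
          rw [he]
          exact Finset.card_image_of_injOn (hinj.mono (Finset.filter_subset _ _))
        have hfiltsplit : ∀ j : β, (F1p.filter (fun S => j ∈ S)).card
            + (F0.filter (fun S => j ∈ S)).card = (F.filter (fun S => j ∈ S)).card := by
          intro j
          have h1 : ((F.filter (fun S => j ∈ S)).filter (fun S => a ∈ S)).card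
              + ((F.filter (fun S => j ∈ S)).filter (fun S => a ∉ S)).card
              = (F.filter (fun S => j ∈ S)).card :=
            Finset.card_filter_add_card_filter_not (fun S => a ∈ S)
          have e1 : F1p.filter (fun S => j ∈ S) = (F.filter (fun S => j ∈ S)).filter (fun S => a ∈ S) := by
            rw [hF1pdef, Finset.filter_filter, Finset.filter_filter]
            exact Finset.filter_congr (fun S _ => by tauto)
          have e2 : F0.filter (fun S => j ∈ S) = (F.filter (fun S => j ∈ S)).filter (fun S => a ∉ S) := by
            rw [hF0def, Finset.filter_filter, Finset.filter_filter]
            exact Finset.filter_congr (fun S _ => by tauto)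
          rw [e1, e2]
          exact h1
        have IH0 := IH F0 h0ne hF0sub
        have IH1 := IH F1 hF1ne hF1sub
        rw [hF1card] at IH1
        have IH1' : alphaLog α (F1p.card : ℝ) ≤ ∑ j ∈ A',
            binThc α (((F1p.filter (fun S => j ∈ S)).card : ℝ) / (F1p.card : ℝ)) := by
          refine le_trans IH1 (le_of_eq (Finset.sum_congr rfl (fun j hj => ?_)))
          rw [hfilt1 j hj]
        have hNr : (F.card : ℝ) = (F0.card : ℝ) + (F1p.card : ℝ) := by
          rw [← hsplit]; push_cast; ring
        have chain := alphaLog_chain hα haPos hbPos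
        rw [← hNr] at chain
        -- weight bounds
        have hw1 : ((F0.card : ℝ)/(F.card : ℝ)) ^ α * alphaLog α (F0.card : ℝ)
            ≤ ((F0.card : ℝ)/(F.card : ℝ)) * alphaLog α (F0.card : ℝ) := by
          apply mul_le_mul_of_nonneg_right _ (alphaLog_nonneg hα haGe1)
          calc ((F0.card : ℝ)/(F.card : ℝ)) ^ α ≤ ((F0.card : ℝ)/(F.card : ℝ)) ^ (1:ℝ) := Real.rpow_le_rpow_of_exponent_ge (div_pos haPos hNpos) ((div_le_one hNpos).mpr (by linarith)) hα
            _ = ((F0.card : ℝ)/(F.card : ℝ)) := Real.rpow_one _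
        have hw2 : ((F1p.card : ℝ)/(F.card : ℝ)) ^ α * alphaLog α (F1p.card : ℝ)
            ≤ ((F1p.card : ℝ)/(F.card : ℝ)) * alphaLog α (F1p.card : ℝ) := by
          apply mul_le_mul_of_nonneg_right _ (alphaLog_nonneg hα hbGe1)
          calc ((F1p.card : ℝ)/(F.card : ℝ)) ^ α ≤ ((F1p.card : ℝ)/(F.card : ℝ)) ^ (1:ℝ) := Real.rpow_le_rpow_of_exponent_ge (div_pos hbPos hNpos) ((div_le_one hNpos).mpr (by linarith)) hα
            _ = ((F1p.card : ℝ)/(F.card : ℝ)) := Real.rpow_one _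
        have step1 : alphaLog α (F.card : ℝ) ≤ binThc α ((F1p.card : ℝ)/(F.card : ℝ))
            + ((F0.card : ℝ)/(F.card : ℝ)) * alphaLog α (F0.card : ℝ)
            + ((F1p.card : ℝ)/(F.card : ℝ)) * alphaLog α (F1p.card : ℝ) := by
          rw [chain]; linarith
        have step2 : alphaLog α (F.card : ℝ) ≤ binThc α ((F1p.card : ℝ)/(F.card : ℝ))
            + ((F0.card : ℝ)/(F.card : ℝ)) * (∑ j ∈ A',
              binThc α (((F0.filter (fun S => j ∈ S)).card : ℝ) / (F0.card : ℝ)))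
            + ((F1p.card : ℝ)/(F.card : ℝ)) * (∑ j ∈ A',
              binThc α (((F1p.filter (fun S => j ∈ S)).card : ℝ) / (F1p.card : ℝ))) := by
          refine le_trans step1 ?_
          have w1 : (0:ℝ) ≤ (F0.card : ℝ)/(F.card : ℝ) := le_of_lt (div_pos haPos hNpos)
          have w2 : (0:ℝ) ≤ (F1p.card : ℝ)/(F.card : ℝ) := le_of_lt (div_pos hbPos hNpos)
          have := mul_le_mul_of_nonneg_left IH0 w1
          have := mul_le_mul_of_nonneg_left IH1' w2
          linarith
        have step3 : binThc α ((F1p.card : ℝ)/(F.card : ℝ))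
            + ((F0.card : ℝ)/(F.card : ℝ)) * (∑ j ∈ A',
              binThc α (((F0.filter (fun S => j ∈ S)).card : ℝ) / (F0.card : ℝ)))
            + ((F1p.card : ℝ)/(F.card : ℝ)) * (∑ j ∈ A',
              binThc α (((F1p.filter (fun S => j ∈ S)).card : ℝ) / (F1p.card : ℝ)))
            ≤ binThc α ((F1p.card : ℝ)/(F.card : ℝ))
            + ∑ j ∈ A', binThc α (((F.filter (fun S => j ∈ S)).card : ℝ) / (F.card : ℝ)) := by
          rw [Finset.mul_sum, Finset.mul_sum, add_assoc, ← Finset.sum_add_distrib]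
          apply add_le_add_right
          apply Finset.sum_le_sum
          intro j _
          have hx : ((F0.filter (fun S => j ∈ S)).card : ℝ) / (F0.card : ℝ) ∈ Set.Icc (0:ℝ) 1 := by
            constructor
            · positivity
            · rw [div_le_one haPos]
              exact_mod_cast Finset.card_filter_le _ _
          have hy : ((F1p.filter (fun S => j ∈ S)).card : ℝ) / (F1p.card : ℝ) ∈ Set.Icc (0:ℝ) 1 := by
            constructor
            · positivity
            · rw [div_le_one hbPos]
              exact_mod_cast Finset.card_filter_le _ _
          have hww : (F0.card : ℝ)/(F.card : ℝ) + (F1p.card : ℝ)/(F.card : ℝ) = 1 := by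
            rw [← add_div, ← hNr, div_self hNne]
          have key := (concaveOn_binThc hα).2 hx hy
            (le_of_lt (div_pos haPos hNpos)) (le_of_lt (div_pos hbPos hNpos)) hww
          simp only [smul_eq_mul] at key
          have harg : ((F0.card : ℝ)/(F.card : ℝ)) * (((F0.filter (fun S => j ∈ S)).card : ℝ) / (F0.card : ℝ))
              + ((F1p.card : ℝ)/(F.card : ℝ)) * (((F1p.filter (fun S => j ∈ S)).card : ℝ) / (F1p.card : ℝ))
              = ((F.filter (fun S => j ∈ S)).card : ℝ) / (F.card : ℝ) := by
            rw [← hfiltsplit j]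
            push_cast
            field_simp
            ring
          rw [harg] at key
          exact key
        rw [Finset.sum_insert hnotin, ← hF1pdef]
        exact le_trans step2 step3
lemma concaveOn_div_x {r : ℝ} (hr : 0 < r) (hr1 : r^2 < 1) (B B1 B2 : ℝ → ℝ)
    (hB : ∀ x : ℝ, 0 < x → x^2 < 1 → HasDerivAt B (B1 x) x)
    (hB1 : ∀ x : ℝ, 0 < x → x^2 < 1 → HasDerivAt B1 (B2 x) x)
    (hψ : ∀ x : ℝ, 0 < x → x < r → B2 x * x^2 - 2*B1 x*x + 2*B x ≤ 0) :
    ConcaveOn ℝ (Set.Ioc 0 r) (fun x => B x / x) := by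
  have hdom : ∀ x : ℝ, x ∈ Set.Ioc 0 r → 0 < x ∧ x^2 < 1 := by
    intro x hx
    refine ⟨hx.1, lt_of_le_of_lt ?_ hr1⟩
    have := hx.2
    nlinarith [hx.1]
  have hdomo : ∀ x : ℝ, x ∈ Set.Ioo 0 r → 0 < x ∧ x^2 < 1 := by
    intro x hx
    exact hdom x ⟨hx.1, le_of_lt hx.2⟩
  have hio : interior (Set.Ioc (0:ℝ) r) = Set.Ioo 0 r := interior_Ioc
  have hf : ∀ x : ℝ, 0 < x → x^2 < 1 →
      HasDerivAt (fun y => B y / y) ((B1 x * x - B x * 1)/x^2) x := by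
    intro x h1 h2
    exact (hB x h1 h2).div (hasDerivAt_id x) (ne_of_gt h1)
  refine concaveOn_of_hasDerivWithinAt2_nonpos (f' := fun x => (B1 x * x - B x * 1)/x^2)
    (f'' := fun x => (B2 x * x^2 - 2*B1 x*x + 2*B x)/x^3)
    (convex_Ioc 0 r) ?_ ?_ ?_ ?_
  · intro x hx
    obtain ⟨h1, h2⟩ := hdom x hx
    exact (hf x h1 h2).continuousAt.continuousWithinAt
  · intro x hx
    rw [hio] at hx
    obtain ⟨h1, h2⟩ := hdomo x hx
    exact (hf x h1 h2).hasDerivWithinAt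
  · intro x hx
    rw [hio] at hx
    obtain ⟨h1, h2⟩ := hdomo x hx
    have hnum : HasDerivAt (fun y => B1 y * y - B y * 1)
        ((B2 x * x + B1 x * 1) - B1 x * 1) x :=
      ((hB1 x h1 h2).mul (hasDerivAt_id x)).sub ((hB x h1 h2).mul_const 1)
    have hden : HasDerivAt (fun y : ℝ => y^2) ((2:ℕ) * x^1) x := hasDerivAt_pow 2 x
    have hx2 : x^2 ≠ 0 := pow_ne_zero 2 (ne_of_gt h1)
    have H := hnum.div hden hx2
    have : (((B2 x * x + B1 x * 1) - B1 x * 1) * x^2 - (B1 x * x - B x * 1) * ((2:ℕ) * x^1))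
        / (x^2)^2 = (B2 x * x^2 - 2*B1 x*x + 2*B x)/x^3 := by
      field_simp
      ring
    rw [this] at H
    exact H.hasDerivWithinAt
  · intro x hx
    rw [hio] at hx
    have h3 : (0:ℝ) < x^3 := pow_pos hx.1 3
    exact div_nonpos_iff.mpr (Or.inr ⟨hψ x hx.1 hx.2, le_of_lt h3⟩)
lemma sqrt_half_sq : (1/Real.sqrt 2)^2 = 1/2 := by
  rw [div_pow, one_pow, Real.sq_sqrt (by norm_num : (0:ℝ) ≤ 2)]

lemma sqrt_half_pos : (0:ℝ) < 1/Real.sqrt 2 := by positivity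

lemma concaveOn_g1 :
    ConcaveOn ℝ (Set.Ioc (0:ℝ) (1/Real.sqrt 2)) (fun x => binThc 1 (x^2)/x) := by
  have hEq : (fun x : ℝ => binThc 1 (x^2)/x)
      = fun x => (-(x^2 * Real.log (x^2)) - (1 - x^2) * Real.log (1 - x^2)) / x := by
    funext x; rw [binThc]; simp
  rw [hEq]
  refine concaveOn_div_x sqrt_half_pos (by rw [sqrt_half_sq]; norm_num)
    _ (fun x => -(2*x*Real.log (x^2)) + 2*x*Real.log (1-x^2))
    (fun x => -(2*Real.log (x^2)) - 4 + 2*Real.log (1-x^2) - 4*x^2/(1-x^2)) ?_ ?_ ?_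
  · intro x h1 h2
    have hxne : x ≠ 0 := ne_of_gt h1
    have hx2ne : x^2 ≠ 0 := pow_ne_zero 2 hxne
    have h1u : (0:ℝ) < 1 - x^2 := by linarith
    have h1une : (1:ℝ) - x^2 ≠ 0 := ne_of_gt h1u
    have hsq : HasDerivAt (fun y : ℝ => y^2) (2*x) x := by
      simpa using hasDerivAt_pow 2 x
    have hlogsq : HasDerivAt (fun y : ℝ => Real.log (y^2)) (2*x/x^2) x := hsq.log hx2ne
    have h1sq : HasDerivAt (fun y : ℝ => 1 - y^2) (-(2*x)) x := by
      exact hsq.const_sub 1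
    have hlog1 : HasDerivAt (fun y : ℝ => Real.log (1-y^2)) (-(2*x)/(1-x^2)) x :=
      h1sq.log h1une
    have H := ((hsq.mul hlogsq).neg).sub (h1sq.mul hlog1)
    have e : -(2*x * Real.log (x ^ 2) + x ^ 2 * (2*x / x ^ 2))
        - (-(2*x) * Real.log (1 - x ^ 2) + (1 - x ^ 2) * (-(2*x) / (1 - x ^ 2)))
        = -(2*x*Real.log (x^2)) + 2*x*Real.log (1-x^2) := by
      field_simp
      ring
    rw [e] at H
    exact H
  · intro x h1 h2
    have hxne : x ≠ 0 := ne_of_gt h1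
    have hx2ne : x^2 ≠ 0 := pow_ne_zero 2 hxne
    have h1u : (0:ℝ) < 1 - x^2 := by linarith
    have h1une : (1:ℝ) - x^2 ≠ 0 := ne_of_gt h1u
    have hsq : HasDerivAt (fun y : ℝ => y^2) (2*x) x := by
      simpa using hasDerivAt_pow 2 x
    have hlogsq : HasDerivAt (fun y : ℝ => Real.log (y^2)) (2*x/x^2) x := hsq.log hx2ne
    have h1sq : HasDerivAt (fun y : ℝ => 1 - y^2) (-(2*x)) x := by
      exact hsq.const_sub 1
    have hlog1 : HasDerivAt (fun y : ℝ => Real.log (1-y^2)) (-(2*x)/(1-x^2)) x :=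
      h1sq.log h1une
    have h2x : HasDerivAt (fun y : ℝ => 2*y) (2*1) x := (hasDerivAt_id x).const_mul 2
    have H := ((h2x.mul hlogsq).neg).add (h2x.mul hlog1)
    have e : -(2*1 * Real.log (x ^ 2) + 2*x * (2*x / x ^ 2))
        + (2*1 * Real.log (1 - x ^ 2) + 2*x * (-(2*x) / (1 - x ^ 2)))
        = -(2*Real.log (x^2)) - 4 + 2*Real.log (1-x^2) - 4*x^2/(1-x^2) := by
      field_simp
      ring
    rw [e] at H
    exact H
  · intro x h1 hr
    have hxr : x^2 < 1/2 := by
      have := sqrt_half_sq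
      nlinarith [sqrt_half_pos]
    have h1u : (0:ℝ) < 1 - x^2 := by linarith
    have h1une : (1:ℝ) - x^2 ≠ 0 := ne_of_gt h1u
    have hxne : x ≠ 0 := ne_of_gt h1
    have hx2ne : x^2 ≠ 0 := pow_ne_zero 2 hxne
    have e : (-(2*Real.log (x^2)) - 4 + 2*Real.log (1-x^2) - 4*x^2/(1-x^2)) * x^2
        - 2*(-(2*x*Real.log (x^2)) + 2*x*Real.log (1-x^2))*x
        + 2*(-(x^2 * Real.log (x^2)) - (1 - x^2) * Real.log (1 - x^2))
        = -2*Real.log (1-x^2) - 4*x^2 - 4*x^4/(1-x^2) := by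
      field_simp
      ring
    rw [e]
    have hL : Real.log ((1-x^2)⁻¹) ≤ (1-x^2)⁻¹ - 1 :=
      Real.log_le_sub_one_of_pos (inv_pos.mpr h1u)
    rw [Real.log_inv] at hL
    have hinv : (1-x^2)⁻¹ - 1 = x^2/(1-x^2) := by field_simp; ring
    rw [hinv] at hL
    have hb1 : x^2/(1-x^2) ≤ 2*x^2 := by
      rw [div_le_iff₀ h1u]; nlinarith
    have hb2 : (0:ℝ) ≤ 4*x^4/(1-x^2) := by positivity
    have hb3 : x^2/(1-x^2) ≤ 2*x^2 + 2*x^4/(1-x^2) := by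
      have : (0:ℝ) ≤ 2*x^4/(1-x^2) := by positivity
      linarith
    linarith
lemma psi_nonneg {α u : ℝ} (hα : 1 < α) (hα2 : α ≤ 3.67) (hu : 0 < u) (hu2 : u ≤ 1/2) :
    (2:ℝ) ≤ (4*α^2-6*α+2)*u^α + 2*α*u*(1-u)^(α-1)
      + 4*α*(α-1)*u^2*(1-u)^(α-2) + 2*(1-u)^α := by
  have h1u : (0:ℝ) < 1 - u := by linarith
  have h1u2 : (1:ℝ)/2 ≤ 1 - u := by linarith
  have h1u1 : (1:ℝ) - u ≤ 1 := by linarith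
  have hαpos : (0:ℝ) < α := by linarith
  -- Bernoulli : 1 - α u ≤ (1-u)^α
  have bern : 1 - α*u ≤ (1-u)^α := by
    have h := one_add_mul_self_le_rpow_one_add (by linarith : (-1:ℝ) ≤ -u) hα.le
    rw [show (1:ℝ) + -u = 1 - u from by ring] at h
    linarith [h]
  -- main inequality S
  have S : 2*α*u ≤ (4*α^2-6*α+2)*u^α + 2*α*u*(1-u)^(α-1) + 4*α*(α-1)*u^2*(1-u)^(α-2) := by
    have t3 : (0:ℝ) ≤ (4*α^2-6*α+2)*u^α :=
      mul_nonneg (by nlinarith) (Real.rpow_nonneg hu.le α)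
    rcases le_or_gt α 2 with hle2 | hgt2
    · -- 1 < α ≤ 2
      have hlog : -Real.log (1-u) ≤ 2*u := by
        have hL : Real.log ((1-u)⁻¹) ≤ (1-u)⁻¹ - 1 :=
          Real.log_le_sub_one_of_pos (inv_pos.mpr h1u)
        rw [Real.log_inv] at hL
        have : (1-u)⁻¹ - 1 = u/(1-u) := by field_simp; ring
        rw [this] at hL
        have : u/(1-u) ≤ 2*u := by
          rw [div_le_iff₀ h1u]; nlinarith
        linarith
      have s1 : 1 - 2*(α-1)*u ≤ (1-u)^(α-1) := by
        rw [Real.rpow_def_of_pos h1u]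
        have hexp := Real.add_one_le_exp (Real.log (1-u) * (α-1))
        nlinarith [mul_le_mul_of_nonneg_left hlog (by linarith : (0:ℝ) ≤ α - 1)]
      have s2 : (1:ℝ) ≤ (1-u)^(α-2) :=
        Real.one_le_rpow_of_pos_of_le_one_of_nonpos h1u h1u1 (by linarith)
      have t1 : 2*α*u*(1 - 2*(α-1)*u) ≤ 2*α*u*(1-u)^(α-1) :=
        mul_le_mul_of_nonneg_left s1 (by positivity)
      have hc : (0:ℝ) ≤ 4*α*(α-1)*u^2 :=
        mul_nonneg (mul_nonneg (by linarith) (by linarith)) (sq_nonneg u)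
      have t2 : 4*α*(α-1)*u^2*1 ≤ 4*α*(α-1)*u^2*(1-u)^(α-2) :=
        mul_le_mul_of_nonneg_left s2 hc
      nlinarith [t1, t2, t3]
    · -- 2 < α
      have bern1 : 1 - (α-1)*u ≤ (1-u)^(α-1) := by
        have h := one_add_mul_self_le_rpow_one_add
          (by linarith : (-1:ℝ) ≤ -u) (by linarith : (1:ℝ) ≤ α - 1)
        rw [show (1:ℝ) + -u = 1 - u from by ring] at h
        linarith [h]
      have t1 : 2*α*u*(1 - (α-1)*u) ≤ 2*α*u*(1-u)^(α-1) :=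
        mul_le_mul_of_nonneg_left bern1 (by positivity)
      rcases le_or_gt α 3 with hle3 | hgt3
      · -- 2 < α ≤ 3
        have s2 : (1:ℝ) - u ≤ (1-u)^(α-2) := by
          have := Real.rpow_le_rpow_of_exponent_ge h1u h1u1 (by linarith : α - 2 ≤ 1)
          rwa [Real.rpow_one] at this
        have hc : (0:ℝ) ≤ 4*α*(α-1)*u^2 :=
          mul_nonneg (mul_nonneg (by linarith) (by linarith)) (sq_nonneg u)
        have t2 : 4*α*(α-1)*u^2*(1-u) ≤ 4*α*(α-1)*u^2*(1-u)^(α-2) :=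
          mul_le_mul_of_nonneg_left s2 hc
        have h5 : (0:ℝ) ≤ 2*α*(α-1)*u^2*(1-2*u) :=
          mul_nonneg (mul_nonneg (mul_nonneg (by linarith) (by linarith)) (sq_nonneg u))
            (by linarith)
        nlinarith [t1, t2, t3, h5]
      · -- 3 < α ≤ 3.67
        have hb1 : (1:ℝ) ≤ α - 2 := by linarith
        have key : α ≤ (2*α-1)*u^(α-2) + 2*α*(1-u)^(α-2) := by
          have c1 : ((1:ℝ)/2)^(α-2) ≤ (u^(α-2) + (1-u)^(α-2))/2 := by
            have hm := (convexOn_rpow hb1).2 (Set.mem_Ici.mpr hu.le)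
              (Set.mem_Ici.mpr h1u.le) (by norm_num : (0:ℝ) ≤ 1/2)
              (by norm_num : (0:ℝ) ≤ 1/2) (by norm_num)
            simp only [smul_eq_mul] at hm
            rw [show (1:ℝ)/2*u + 1/2*(1-u) = 1/2 from by ring] at hm
            linarith [hm]
          have c2 : ((1:ℝ)/2)^(α-2) ≤ (1-u)^(α-2) :=
            Real.rpow_le_rpow (by norm_num) h1u2 (by linarith)
          have c6 : (2:ℝ)^((167:ℝ)/100) ≤ 11/3 := by
            have hp : ((2:ℝ)^((167:ℝ)/100))^(100:ℕ) = 2^(167:ℕ) := by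
              rw [← Real.rpow_natCast ((2:ℝ)^((167:ℝ)/100)) 100,
                ← Real.rpow_mul (by norm_num : (0:ℝ) ≤ 2)]
              norm_num
            apply le_of_pow_le_pow_left₀ (by norm_num : (100:ℕ) ≠ 0) (by norm_num : (0:ℝ) ≤ 11/3)
            rw [hp, div_pow, le_div_iff₀ (by positivity)]
            norm_num
          have c5 : (2:ℝ)^(α-2) ≤ (2:ℝ)^((167:ℝ)/100) := by
            apply Real.rpow_le_rpow_of_exponent_le (by norm_num)
            have : (3.67:ℝ) = 367/100 := by norm_num
            linarith [hα2, this]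
          have c4 : ((1:ℝ)/2)^(α-2) = ((2:ℝ)^(α-2))⁻¹ := by
            rw [one_div, ← Real.inv_rpow (by norm_num : (0:ℝ) ≤ 2)]
          have h2pos : (0:ℝ) < (2:ℝ)^(α-2) := Real.rpow_pos_of_pos two_pos _
          have c3 : α ≤ (4*α-1) * ((1:ℝ)/2)^(α-2) := by
            rw [c4, ← div_eq_mul_inv, le_div_iff₀ h2pos]
            have : α * (2:ℝ)^(α-2) ≤ α * (11/3) :=
              mul_le_mul_of_nonneg_left (c5.trans c6) (by linarith)
            nlinarith
          nlinarith [c1, c2, c3]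
        have euu : u^α = u^2 * u^(α-2) := by
          rw [← Real.rpow_natCast u 2, ← Real.rpow_add hu]
          norm_num
        have hc2 : (0:ℝ) ≤ 2*(α-1)*u^2 :=
          mul_nonneg (mul_nonneg (by norm_num) (by linarith)) (sq_nonneg u)
        have keym := mul_le_mul_of_nonneg_left key hc2
        have keym' : 2*α*(α-1)*u^2 ≤ (4*α^2-6*α+2)*u^α + 4*α*(α-1)*u^2*(1-u)^(α-2) := by
          have expand : 2*(α-1)*u^2 * ((2*α-1)*u^(α-2) + 2*α*(1-u)^(α-2))
              = (4*α^2-6*α+2)*(u^2*u^(α-2)) + 4*α*(α-1)*u^2*(1-u)^(α-2) := by ring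
          calc 2*α*(α-1)*u^2 = 2*(α-1)*u^2*α := by ring
            _ ≤ 2*(α-1)*u^2 * ((2*α-1)*u^(α-2) + 2*α*(1-u)^(α-2)) := keym
            _ = (4*α^2-6*α+2)*(u^2*u^(α-2)) + 4*α*(α-1)*u^2*(1-u)^(α-2) := expand
            _ = (4*α^2-6*α+2)*u^α + 4*α*(α-1)*u^2*(1-u)^(α-2) := by rw [← euu]
        have t1' : 2*α*u - 2*α*(α-1)*u^2 ≤ 2*α*u*(1-u)^(α-1) := by
          calc 2*α*u - 2*α*(α-1)*u^2 = 2*α*u*(1 - (α-1)*u) := by ring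
            _ ≤ _ := t1
        linarith [keym', t1']
  have t0 : (0:ℝ) ≤ u^α := Real.rpow_nonneg hu.le α
  linarith
lemma concaveOn_galpha {α : ℝ} (hα : 1 < α) (hα2 : α ≤ 3.67) :
    ConcaveOn ℝ (Set.Ioc (0:ℝ) (1/Real.sqrt 2)) (fun x => binThc α (x^2)/x) := by
  have hα1 : α ≠ 1 := ne_of_gt hα
  have hEq : (fun x : ℝ => binThc α (x^2)/x)
      = fun x => (((x^2)^α + (1-x^2)^α - 1)/(1-α)) / x := by
    funext x; rw [binThc_ne α hα1]
  rw [hEq]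
  refine concaveOn_div_x sqrt_half_pos (by rw [sqrt_half_sq]; norm_num)
    _ (fun x => (2*x*α*(x^2)^(α-1) + -(2*x)*α*(1-x^2)^(α-1))/(1-α))
    (fun x => ((2*1*α*(x^2)^(α-1) + 2*x*α*(2*x*(α-1)*(x^2)^(α-1-1)))
      + (-(2*1)*α*(1-x^2)^(α-1) + -(2*x)*α*(-(2*x)*(α-1)*(1-x^2)^(α-1-1))))/(1-α)) ?_ ?_ ?_
  · intro x h1 h2
    have hx2ne : x^2 ≠ 0 := pow_ne_zero 2 (ne_of_gt h1)
    have h1u : (0:ℝ) < 1 - x^2 := by linarith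
    have h1une : (1:ℝ) - x^2 ≠ 0 := ne_of_gt h1u
    have hsq : HasDerivAt (fun y : ℝ => y^2) (2*x) x := by
      simpa using hasDerivAt_pow 2 x
    have h1sq : HasDerivAt (fun y : ℝ => 1 - y^2) (-(2*x)) x := by
      exact hsq.const_sub 1
    exact (((hsq.rpow_const (Or.inl hx2ne)).add
      (h1sq.rpow_const (Or.inl h1une))).sub_const 1).div_const (1-α)
  · intro x h1 h2
    have hx2ne : x^2 ≠ 0 := pow_ne_zero 2 (ne_of_gt h1)
    have h1u : (0:ℝ) < 1 - x^2 := by linarith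
    have h1une : (1:ℝ) - x^2 ≠ 0 := ne_of_gt h1u
    have hsq : HasDerivAt (fun y : ℝ => y^2) (2*x) x := by
      simpa using hasDerivAt_pow 2 x
    have h1sq : HasDerivAt (fun y : ℝ => 1 - y^2) (-(2*x)) x := by
      exact hsq.const_sub 1
    have h2x : HasDerivAt (fun y : ℝ => 2*y) (2*1) x := (hasDerivAt_id x).const_mul 2
    have p1 : HasDerivAt (fun y : ℝ => 2*y*α*(y^2)^(α-1))
        (2*1*α*(x^2)^(α-1) + 2*x*α*(2*x*(α-1)*(x^2)^(α-1-1))) x :=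
      (h2x.mul_const α).mul (hsq.rpow_const (Or.inl hx2ne))
    have p2 : HasDerivAt (fun y : ℝ => -(2*y)*α*(1-y^2)^(α-1))
        (-(2*1)*α*(1-x^2)^(α-1) + -(2*x)*α*(-(2*x)*(α-1)*(1-x^2)^(α-1-1))) x :=
      ((h2x.neg).mul_const α).mul (h1sq.rpow_const (Or.inl h1une))
    exact (p1.add p2).div_const (1-α)
  · intro x h1 hr
    have hxr : x^2 < 1/2 := by
      have := sqrt_half_sq
      nlinarith [sqrt_half_pos]
    have hx2pos : (0:ℝ) < x^2 := pow_pos h1 2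
    have hx2ne : x^2 ≠ 0 := ne_of_gt hx2pos
    have h1u : (0:ℝ) < 1 - x^2 := by linarith
    have h1une : (1:ℝ) - x^2 ≠ 0 := ne_of_gt h1u
    have hα1' : (1:ℝ) - α ≠ 0 := by intro hh; apply hα1; linarith
    have r1 : (x^2)^(α-1) = (x^2)^α / x^2 := by
      rw [Real.rpow_sub hx2pos, Real.rpow_one]
    have r2 : (x^2)^(α-1-1) = (x^2)^α / x^2 / x^2 := by
      rw [Real.rpow_sub hx2pos (α-1) 1, Real.rpow_one, r1]
    have s1 : (1-x^2)^(α-1) = (1-x^2)^α / (1-x^2) := by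
      rw [Real.rpow_sub h1u, Real.rpow_one]
    have s2 : (1-x^2)^(α-1-1) = (1-x^2)^α / (1-x^2) / (1-x^2) := by
      rw [Real.rpow_sub h1u (α-1) 1, Real.rpow_one, s1]
    have s2' : (1-x^2)^(α-2) = (1-x^2)^α / (1-x^2) / (1-x^2) := by
      rw [show α - 2 = α - 1 - 1 from by ring, s2]
    have E : (((2*1*α*(x^2)^(α-1) + 2*x*α*(2*x*(α-1)*(x^2)^(α-1-1)))
          + (-(2*1)*α*(1-x^2)^(α-1) + -(2*x)*α*(-(2*x)*(α-1)*(1-x^2)^(α-1-1))))/(1-α)) * x^2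
        - 2*((2*x*α*(x^2)^(α-1) + -(2*x)*α*(1-x^2)^(α-1))/(1-α))*x
        + 2*(((x^2)^α + (1-x^2)^α - 1)/(1-α))
        = ((4*α^2-6*α+2)*(x^2)^α + 2*α*(x^2)*(1-x^2)^(α-1)
          + 4*α*(α-1)*(x^2)^2*(1-x^2)^(α-2) + 2*(1-x^2)^α - 2)/(1-α) := by
      rw [r1, r2, s1, s2, s2']
      field_simp
      ring
    rw [E]
    have hpsi := psi_nonneg hα hα2 hx2pos (le_of_lt hxr)
    rw [s1, s2'] at hpsi ⊢
    apply div_nonpos_iff.mpr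
    refine Or.inl ⟨by linarith [hpsi], by linarith⟩

lemma inf_pair {n m : ℕ} (G : Fin m → Finset (Fin n)) (i j : Fin m) :
    ({i, j} : Finset (Fin m)).inf G = G i ∩ G j := by
  rw [Finset.inf_insert, Finset.inf_singleton]
  rfl

/-- Let `G₁, …, G_m` (`m ≥ 2`) be distinct `k`-element subsets
(`k ≥ 1`) of `{1, …, n}` such that no two pairwise intersections coincide.  Let `λ j` be
the proportion of members containing `j` and `λ = Σ_j (λ j)²/k`.  If `λ j ≤ 1/√2` for all
`j`, then for every `α ∈ [1, 3.67]`:  `ln_α (binom m 2) ≤ k · h_α(λ²)/λ`. -/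
theorem alphaLog_choose_le (n m k : ℕ) (hm : 2 ≤ m) (hk : 1 ≤ k)
    (G : Fin m → Finset (Fin n)) (hGinj : Function.Injective G)
    (hGcard : ∀ i, (G i).card = k)
    (hint : ∀ i j s t : Fin m, i ≠ j → s ≠ t →
      ({i, j} : Finset (Fin m)) ≠ ({s, t} : Finset (Fin m)) →
      G i ∩ G j ≠ G s ∩ G t)
    (lamj : Fin n → ℝ)
    (hlamj : ∀ j, lamj j = ((Finset.univ.filter (fun i => j ∈ G i)).card : ℝ) / (m : ℝ))
    (lam : ℝ) (hlam : lam = ∑ j, (lamj j) ^ 2 / (k : ℝ))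
    (hhalf : ∀ j, lamj j ≤ 1 / Real.sqrt 2)
    (α : ℝ) (hα : α ∈ Set.Icc (1 : ℝ) 3.67) :
    alphaLog α ((m.choose 2 : ℕ) : ℝ) ≤ (k : ℝ) * (binThc α (lam ^ 2) / lam) := by
  classical
  obtain ⟨hα1, hα2⟩ := hα
  have hmR : (2:ℝ) ≤ (m:ℝ) := by exact_mod_cast hm
  have hmpos : (0:ℝ) < (m:ℝ) := by linarith
  have hkR : (1:ℝ) ≤ (k:ℝ) := by exact_mod_cast hk
  have hkpos : (0:ℝ) < (k:ℝ) := by linarith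
  have hkne : (k:ℝ) ≠ 0 := ne_of_gt hkpos
  -- the family of pairwise intersections
  set P : Finset (Finset (Fin m)) := Finset.powersetCard 2 Finset.univ with hPdef
  have hinjOn : Set.InjOn (fun e : Finset (Fin m) => e.inf G) ↑P := by
    intro e he e' he' hEq
    obtain ⟨i, j, hij, rfl⟩ :=
      Finset.card_eq_two.mp (Finset.mem_powersetCard.mp (Finset.mem_coe.mp he)).2
    obtain ⟨s, t, hst, rfl⟩ :=
      Finset.card_eq_two.mp (Finset.mem_powersetCard.mp (Finset.mem_coe.mp he')).2
    by_contra hne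
    apply hint i j s t hij hst hne
    simpa [inf_pair] using hEq
  set F : Finset (Finset (Fin n)) := P.image (fun e => e.inf G) with hFdef
  have hFcard : F.card = m.choose 2 := by
    rw [hFdef, Finset.card_image_of_injOn hinjOn, hPdef, Finset.card_powersetCard,
      Finset.card_univ, Fintype.card_fin]
  have hFpos : 0 < m.choose 2 := Nat.choose_pos hm
  have hFne : F.Nonempty := by
    rw [← Finset.card_pos, hFcard]; exact hFpos
  have hNpos : (0:ℝ) < (F.card : ℝ) := by exact_mod_cast hFne.card_pos
  -- filter counts are binomial coefficients of degrees
  have hc : ∀ j : Fin n, (F.filter (fun S => j ∈ S)).card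
      = ((Finset.univ.filter (fun i => j ∈ G i)).card).choose 2 := by
    intro j
    rw [hFdef, Finset.filter_image,
      Finset.card_image_of_injOn (hinjOn.mono (Finset.coe_subset.mpr (Finset.filter_subset _ _)))]
    have hPD : P.filter (fun e => j ∈ e.inf G)
        = Finset.powersetCard 2 (Finset.univ.filter (fun i => j ∈ G i)) := by
      ext e
      simp only [Finset.mem_filter, Finset.mem_powersetCard, hPdef]
      constructor
      · rintro ⟨⟨-, hcard⟩, hj⟩
        refine ⟨?_, hcard⟩
        obtain ⟨i, i', hii, rfl⟩ := Finset.card_eq_two.mp hcard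
        rw [inf_pair] at hj
        intro x hx
        rcases Finset.mem_insert.mp hx with rfl | hx
        · exact Finset.mem_filter.mpr ⟨Finset.mem_univ _, (Finset.mem_inter.mp hj).1⟩
        · rw [Finset.mem_singleton.mp hx]
          exact Finset.mem_filter.mpr ⟨Finset.mem_univ _, (Finset.mem_inter.mp hj).2⟩
      · rintro ⟨hsubD, hcard⟩
        refine ⟨⟨Finset.subset_univ _, hcard⟩, ?_⟩
        obtain ⟨i, i', hii, rfl⟩ := Finset.card_eq_two.mp hcard
        rw [inf_pair]
        have h1 := hsubD (Finset.mem_insert_self i {i'})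
        have h2 := hsubD (Finset.mem_insert_of_mem (Finset.mem_singleton_self i'))
        exact Finset.mem_inter.mpr ⟨(Finset.mem_filter.mp h1).2, (Finset.mem_filter.mp h2).2⟩
    rw [hPD, Finset.card_powersetCard]
  -- degree sum
  have hdeg : ∑ j : Fin n, (Finset.univ.filter (fun i => j ∈ G i)).card = m * k := by
    have e1 : ∀ j : Fin n, (Finset.univ.filter (fun i => j ∈ G i)).card
        = ∑ i : Fin m, if j ∈ G i then 1 else 0 := fun j => Finset.card_filter _ _
    calc ∑ j : Fin n, (Finset.univ.filter (fun i => j ∈ G i)).card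
        = ∑ j : Fin n, ∑ i : Fin m, if j ∈ G i then 1 else 0 :=
          Finset.sum_congr rfl (fun j _ => e1 j)
      _ = ∑ i : Fin m, ∑ j : Fin n, if j ∈ G i then 1 else 0 := Finset.sum_comm
      _ = ∑ i : Fin m, (G i).card := by
          refine Finset.sum_congr rfl (fun i _ => ?_)
          rw [← Finset.card_filter, Finset.filter_univ_mem]
      _ = m * k := by
          rw [Finset.sum_congr rfl (fun i _ => hGcard i)]
          simp [Finset.card_univ, mul_comm]
  have hlamjnn : ∀ j, 0 ≤ lamj j := by
    intro j
    rw [hlamj j]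
    positivity
  have hsuml : ∑ j, lamj j = (k:ℝ) := by
    have : (∑ j : Fin n, ((Finset.univ.filter (fun i => j ∈ G i)).card : ℝ)) = (m:ℝ) * k := by
      exact_mod_cast congrArg (Nat.cast : ℕ → ℝ) hdeg
    calc ∑ j, lamj j
        = ∑ j : Fin n, ((Finset.univ.filter (fun i => j ∈ G i)).card : ℝ) / (m:ℝ) :=
          Finset.sum_congr rfl (fun j _ => hlamj j)
      _ = (∑ j : Fin n, ((Finset.univ.filter (fun i => j ∈ G i)).card : ℝ)) / (m:ℝ) :=
          (Finset.sum_div _ _ _).symm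
      _ = (k:ℝ) := by rw [this]; field_simp
  -- p_j ≤ λ_j²
  have hple : ∀ j : Fin n, ((F.filter (fun S => j ∈ S)).card : ℝ)/(F.card : ℝ)
      ≤ (lamj j)^2 := by
    intro j
    rw [hc j, hFcard, hlamj j]
    have hdm : ((Finset.univ.filter (fun i => j ∈ G i)).card : ℝ) ≤ (m:ℝ) := by
      exact_mod_cast (Finset.card_filter_le _ _).trans_eq (by simp)
    have hdnn : (0:ℝ) ≤ ((Finset.univ.filter (fun i => j ∈ G i)).card : ℝ) := by positivity
    rw [Nat.cast_choose_two, Nat.cast_choose_two]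
    rw [div_pow, div_le_div_iff₀ (by nlinarith) (by positivity)]
    nlinarith [hdnn, hdm, hmR, mul_nonneg (mul_nonneg hdnn hmpos.le) (sub_nonneg.mpr hdm)]
  have hlam2half : ∀ j : Fin n, (lamj j)^2 ≤ 1/2 := by
    intro j
    have := hhalf j
    nlinarith [sqrt_half_sq, hlamjnn j, sqrt_half_pos]
  -- counting bound
  have hcount := counting hα1 (Finset.univ : Finset (Fin n)) F hFne
    (fun S _ => Finset.subset_univ S)
  -- monotone step
  have hmono : ∑ j ∈ Finset.univ, binThc α (((F.filter (fun S => j ∈ S)).card : ℝ) / (F.card : ℝ))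
      ≤ ∑ j : Fin n, binThc α ((lamj j)^2) := by
    apply Finset.sum_le_sum
    intro j _
    exact binThc_mono hα1 (by positivity) (hple j) (hlam2half j)
  -- Jensen step
  set T : Finset (Fin n) := Finset.univ.filter (fun j => lamj j ≠ 0) with hTdef
  have hsplitT : ∀ f : Fin n → ℝ, (∀ j, lamj j = 0 → f j = 0) → ∑ j ∈ T, f j = ∑ j, f j := by
    intro f hf
    have h2 : ∑ j ∈ Finset.univ.filter (fun j => ¬ lamj j ≠ 0), f j = 0 :=
      Finset.sum_eq_zero (fun j hj => hf j (not_not.mp (Finset.mem_filter.mp hj).2))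
    have h3 := Finset.sum_filter_add_sum_filter_not Finset.univ (fun j => lamj j ≠ 0) f
    rw [hTdef]
    linarith [h2, h3]
  have hsumT : ∑ j ∈ T, lamj j = (k:ℝ) := by
    rw [hsplitT lamj (fun j h => h), hsuml]
  have hsumT2 : ∑ j ∈ T, (lamj j)^2 / (k:ℝ) = lam := by
    rw [hsplitT (fun j => (lamj j)^2 / (k:ℝ)) (fun j h => by simp [h]), hlam]
  have hlampos : 0 < lam := by
    have hTne : ∃ j, j ∈ T := by
      by_contra hcon
      push_neg at hcon
      have hz : ∑ j ∈ T, lamj j = 0 := Finset.sum_eq_zero (fun j hj => absurd hj (hcon j))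
      rw [hsumT] at hz
      linarith
    obtain ⟨j0, hj0⟩ := hTne
    have hj0ne : lamj j0 ≠ 0 := (Finset.mem_filter.mp hj0).2
    have hj0pos : 0 < (lamj j0)^2 :=
      pow_pos (lt_of_le_of_ne (hlamjnn j0) (Ne.symm hj0ne)) 2
    have h1 : (0:ℝ) < (lamj j0)^2 / (k:ℝ) := div_pos hj0pos hkpos
    have h2 : (lamj j0)^2/(k:ℝ) ≤ ∑ j ∈ T, (lamj j)^2/(k:ℝ) :=
      Finset.single_le_sum (f := fun j => (lamj j)^2/(k:ℝ))
        (fun j _ => div_nonneg (sq_nonneg _) hkpos.le) hj0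
    rw [hsumT2] at h2
    linarith
  have hgconc : ConcaveOn ℝ (Set.Ioc (0:ℝ) (1/Real.sqrt 2))
      (fun x => binThc α (x^2)/x) := by
    rcases eq_or_lt_of_le hα1 with h | h
    · rw [← h]; exact concaveOn_g1
    · exact concaveOn_galpha h hα2
  have hmem : ∀ j ∈ T, lamj j ∈ Set.Ioc (0:ℝ) (1/Real.sqrt 2) := by
    intro j hj
    have hne := (Finset.mem_filter.mp hj).2
    exact ⟨lt_of_le_of_ne (hlamjnn j) (Ne.symm hne), hhalf j⟩
  have hw1 : ∑ j ∈ T, lamj j / (k:ℝ) = 1 := by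
    rw [← Finset.sum_div, hsumT, div_self hkne]
  have hjensen := hgconc.le_map_sum
    (fun j _ => div_nonneg (hlamjnn j) hkpos.le) hw1 hmem
  have hcombo : ∑ j ∈ T, (lamj j / (k:ℝ)) • lamj j = lam := by
    rw [← hsumT2]
    apply Finset.sum_congr rfl
    intro j _
    rw [smul_eq_mul]
    ring
  rw [hcombo] at hjensen
  -- assemble
  have hfinal : ∑ j : Fin n, binThc α ((lamj j)^2)
      ≤ (k:ℝ) * (binThc α (lam^2) / lam) := by
    have e1 : ∑ j : Fin n, binThc α ((lamj j)^2) = ∑ j ∈ T, binThc α ((lamj j)^2) := by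
      rw [hsplitT (fun j => binThc α ((lamj j)^2)) (fun j h => by simp [h, binThc_zero hα1])]
    have e2 : ∑ j ∈ T, binThc α ((lamj j)^2)
        = (k:ℝ) * ∑ j ∈ T, (lamj j / (k:ℝ)) • (binThc α ((lamj j)^2) / lamj j) := by
      rw [Finset.mul_sum]
      apply Finset.sum_congr rfl
      intro j hj
      have hne := (Finset.mem_filter.mp hj).2
      rw [smul_eq_mul]
      field_simp
    rw [e1, e2]
    have := mul_le_mul_of_nonneg_left hjensen (le_of_lt hkpos)
    exact this
  calc alphaLog α ((m.choose 2 : ℕ) : ℝ) = alphaLog α (F.card : ℝ) := by rw [hFcard]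
    _ ≤ ∑ j ∈ Finset.univ, binThc α (((F.filter (fun S => j ∈ S)).card : ℝ) / (F.card : ℝ)) :=
        hcount
    _ ≤ ∑ j : Fin n, binThc α ((lamj j)^2) := hmono
    _ ≤ (k:ℝ) * (binThc α (lam^2) / lam) := hfinal
end

section
/- (THC-entropy Shearer lemma) Let X = (X₁, …, X_n) be a random variable taking values in the product set S = S₁ × ⋯ × S_n of finite sets, where each coordinate X_j takes values in S_j; for a subset I ⊆ {1, …, n} let X(I) denote the random variable (X_j)_{j∈I}. Suppose 𝓖 is a family of subsets of {1, …, n} such that each j ∈ {1, …, n} belongs to at least k members of 𝓖. Then for every α ≥ 1: k · H_α(X) ≤ Σ_{G∈𝓖} H_α(X(G)). -/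
open Finset

noncomputable def gfun (α x : ℝ) : ℝ :=
  if α = 1 then Real.negMulLog x else (x - x ^ α) / (α - 1)

section Aux

variable {α : ℝ}

lemma alpha_ne_zero (hα : 1 ≤ α) : α ≠ 0 := by intro h; rw [h] at hα; linarith

lemma rpow_le_self {x : ℝ} (hα : 1 ≤ α) (hx : 0 ≤ x) (hx1 : x ≤ 1) : x ^ α ≤ x := by
  rcases eq_or_lt_of_le hx with h | h
  · rw [← h, Real.zero_rpow (alpha_ne_zero hα)]
  · calc x ^ α ≤ x ^ (1 : ℝ) := Real.rpow_le_rpow_of_exponent_ge h hx1 hα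
    _ = x := Real.rpow_one x

lemma gfun_zero (hα : 1 ≤ α) : gfun α 0 = 0 := by
  unfold gfun
  split
  · simp [Real.negMulLog]
  · rw [Real.zero_rpow (alpha_ne_zero hα)]; simp

lemma gfun_nonneg (hα : 1 ≤ α) {x : ℝ} (hx : 0 ≤ x) (hx1 : x ≤ 1) : 0 ≤ gfun α x := by
  unfold gfun
  split
  · exact Real.negMulLog_nonneg hx hx1
  · next h =>
    have h1 : 0 < α - 1 := by
      rcases eq_or_lt_of_le hα with h' | h'
      · exact absurd h'.symm h
      · linarith
    exact div_nonneg (by linarith [rpow_le_self hα hx hx1]) h1.le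

lemma gfun_concave (hα : 1 ≤ α) : ConcaveOn ℝ (Set.Ici 0) (gfun α) := by
  by_cases h : α = 1
  · have : gfun α = Real.negMulLog := by funext x; simp [gfun, h]
    rw [this]; exact Real.concaveOn_negMulLog
  · have h1 : (0:ℝ) ≤ (α - 1)⁻¹ := by
      have : 0 < α - 1 := lt_of_le_of_ne (by linarith) (fun hc => h (by linarith [hc]))
      positivity
    have : gfun α = fun x => (α - 1)⁻¹ • (x - x ^ α) := by
      funext x; simp [gfun, h, div_eq_inv_mul, smul_eq_mul]
    rw [this]
    exact (ConcaveOn.sub (concaveOn_id (convex_Ici 0)) (convexOn_rpow hα)).smul h1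

lemma thc_eq_sum_gfun {A : Type*} [Fintype A] (hα : 1 ≤ α) (p : A → ℝ)
    (h1 : ∑ s, p s = 1) : thc α p = ∑ s, gfun α (p s) := by
  unfold thc gfun
  by_cases h : α = 1
  · simp only [if_pos h, Real.negMulLog, neg_mul, Finset.sum_neg_distrib]
  · simp only [if_neg h]
    have hne : α - 1 ≠ 0 := fun hc => h (by linarith)
    rw [← Finset.sum_div, Finset.sum_sub_distrib, h1]
    have hne2 : (1:ℝ) - α ≠ 0 := fun hc => hne (by linarith)
    field_simp
    ring

end Aux

section Dist

variable {Ω : Type*} [Fintype Ω] {A B C : Type*} [Fintype A] [Fintype B] [Fintype C]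
  [DecidableEq A] [DecidableEq B] [DecidableEq C] {α : ℝ}
variable {μ : Ω → ℝ}

lemma distOf_nonneg (hμ : ∀ ω, 0 ≤ μ ω) (X : Ω → A) (s : A) : 0 ≤ distOf μ X s :=
  Finset.sum_nonneg fun ω _ => hμ ω

lemma distOf_sum (X : Ω → A) : ∑ s, distOf μ X s = ∑ ω, μ ω :=
  Finset.sum_fiberwise_of_maps_to (fun ω _ => mem_univ (X ω)) μ

lemma distOf_sum_one (hμ1 : ∑ ω, μ ω = 1) (X : Ω → A) : ∑ s, distOf μ X s = 1 := by
  rw [distOf_sum, hμ1]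

lemma thc_nonneg (hα : 1 ≤ α) (p : A → ℝ) (hp : ∀ s, 0 ≤ p s) (hp1 : ∑ s, p s = 1) :
    0 ≤ thc α p := by
  rw [thc_eq_sum_gfun hα p hp1]
  refine Finset.sum_nonneg fun s _ => gfun_nonneg hα (hp s) ?_
  rw [← hp1]
  exact Finset.single_le_sum (fun s _ => hp s) (mem_univ s)

lemma distOf_comp_inj_sum (φ : A → B) (hφ : Function.Injective φ) (V : Ω → A)
    (h : ℝ → ℝ) (h0 : h 0 = 0) :
    ∑ b, h (distOf μ (fun ω => φ (V ω)) b) = ∑ a, h (distOf μ V a) := by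
  have key : ∀ a, distOf μ (fun ω => φ (V ω)) (φ a) = distOf μ V a := by
    intro a
    unfold distOf
    apply Finset.sum_congr _ (fun _ _ => rfl)
    ext ω
    simp [hφ.eq_iff]
  have zero : ∀ b, b ∉ univ.image φ → distOf μ (fun ω => φ (V ω)) b = 0 := by
    intro b hb
    apply Finset.sum_eq_zero
    intro ω hω
    exfalso
    apply hb
    simp only [mem_filter, mem_univ, true_and] at hω
    exact hω ▸ Finset.mem_image_of_mem φ (mem_univ (V ω))
  rw [← Finset.sum_subset (Finset.subset_univ (univ.image φ))
      (fun b _ hb => by rw [zero b hb, h0])]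
  rw [Finset.sum_image (fun a _ a' _ hh => hφ hh)]
  exact Finset.sum_congr rfl fun a _ => by rw [key]

lemma thc_comp_inj (hα : 1 ≤ α) (φ : A → B) (hφ : Function.Injective φ) (V : Ω → A) :
    thc α (distOf μ (fun ω => φ (V ω))) = thc α (distOf μ V) := by
  unfold thc
  by_cases h : α = 1
  · rw [if_pos h, if_pos h]
    congr 1
    exact distOf_comp_inj_sum φ hφ V (fun x => x * Real.log x) (by simp)
  · rw [if_neg h, if_neg h]
    congr 2
    exact distOf_comp_inj_sum φ hφ V (fun x => x ^ α) (Real.zero_rpow (alpha_ne_zero hα))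

lemma distOf_fst_marginal (Y : Ω → A) (Z : Ω → B) (b : B) :
    ∑ a, distOf μ (fun ω => (Y ω, Z ω)) (a, b) = distOf μ Z b := by
  unfold distOf
  have : ∀ a : A, (univ.filter fun ω => (Y ω, Z ω) = (a, b))
      = (univ.filter fun ω => Z ω = b).filter fun ω => Y ω = a := by
    intro a
    rw [Finset.filter_filter]
    apply Finset.filter_congr
    intro ω _
    simp [Prod.ext_iff, and_comm]
  simp_rw [this]
  exact Finset.sum_fiberwise_of_maps_to (fun ω _ => mem_univ (Y ω)) μ

lemma distOf_congr {F : Ω → A} {F' : Ω → B} {x : A} {x' : B}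
    (h : ∀ ω, F ω = x ↔ F' ω = x') : distOf μ F x = distOf μ F' x' := by
  unfold distOf
  apply Finset.sum_congr _ (fun _ _ => rfl)
  ext ω
  simp [h ω]

end Dist

section Chain

variable {A B C : Type*} [Fintype A] [Fintype B] [Fintype C] {α : ℝ}

lemma chain_rule (hα : 1 ≤ α) (p : A × B → ℝ) (hp : ∀ x, 0 ≤ p x) :
    thc α p = thc α (fun b => ∑ a, p (a, b)) + condThc1 α p := by
  have hα0 : α ≠ 0 := alpha_ne_zero hα
  by_cases h1 : α = 1
  · subst h1
    simp only [thc, condThc1, eq_self_iff_true, if_true, Real.rpow_one]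
    have key : ∀ b, (∑ a, p (a, b)) *
        (-∑ a, (p (a, b) / ∑ a', p (a', b)) * Real.log (p (a, b) / ∑ a', p (a', b)))
        = -(∑ a, p (a, b) * Real.log (p (a, b)))
          + (∑ a, p (a, b)) * Real.log (∑ a, p (a, b)) := by
      intro b
      rcases eq_or_lt_of_le (Finset.sum_nonneg fun a _ => hp (a, b)) with hb | hb
      · have hz : ∀ a, p (a, b) = 0 := by
          intro a
          exact (Finset.sum_eq_zero_iff_of_nonneg (fun a _ => hp (a, b))).mp hb.symm a
            (mem_univ a)
        simp [hz]
      · have hbne : (∑ a, p (a, b)) ≠ 0 := hb.ne'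
        have hterm : ∀ a, (∑ a', p (a', b)) *
            ((p (a, b) / ∑ a', p (a', b)) * Real.log (p (a, b) / ∑ a', p (a', b)))
            = p (a, b) * Real.log (p (a, b)) - p (a, b) * Real.log (∑ a', p (a', b)) := by
          intro a
          rcases eq_or_lt_of_le (hp (a, b)) with hz | hz
          · rw [← hz]; simp
          · rw [Real.log_div hz.ne' hbne]
            field_simp
        rw [mul_neg, Finset.mul_sum]
        simp_rw [hterm]
        rw [Finset.sum_sub_distrib, ← Finset.sum_mul]
        ring
    rw [Fintype.sum_prod_type_right]
    simp_rw [key]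
    rw [Finset.sum_add_distrib, Finset.sum_neg_distrib]
    ring
  · simp only [thc, condThc1, if_neg h1]
    have h1α : (1:ℝ) - α ≠ 0 := fun hc => h1 (by linarith)
    have key : ∀ b, (∑ a, p (a, b)) ^ α *
        (((∑ a, (p (a, b) / ∑ a', p (a', b)) ^ α) - 1) / (1 - α))
        = ((∑ a, p (a, b) ^ α) - (∑ a, p (a, b)) ^ α) / (1 - α) := by
      intro b
      rcases eq_or_lt_of_le (Finset.sum_nonneg fun a _ => hp (a, b)) with hb | hb
      · have hz : ∀ a, p (a, b) = 0 := by
          intro a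
          exact (Finset.sum_eq_zero_iff_of_nonneg (fun a _ => hp (a, b))).mp hb.symm a
            (mem_univ a)
        simp [hz, ← hb, Real.zero_rpow hα0]
      · have hbne : (∑ a, p (a, b)) ≠ 0 := hb.ne'
        have hSα : (∑ a, p (a, b)) ^ α ≠ 0 := (Real.rpow_pos_of_pos hb α).ne'
        have hdiv : ∀ a, (p (a, b) / ∑ a', p (a', b)) ^ α
            = p (a, b) ^ α / (∑ a', p (a', b)) ^ α := fun a =>
          Real.div_rpow (hp (a, b)) (Finset.sum_nonneg fun a' _ => hp (a', b)) α
        simp_rw [hdiv]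
        rw [← Finset.sum_div]
        field_simp
    simp_rw [key]
    rw [Fintype.sum_prod_type_right, ← Finset.sum_div, ← add_div]
    congr 1
    rw [Finset.sum_sub_distrib]
    ring

lemma cond1_nonneg {Ω : Type*} [Fintype Ω] [DecidableEq A] [DecidableEq B]
    (hα : 1 ≤ α) (μ : Ω → ℝ) (hμ : ∀ ω, 0 ≤ μ ω) (hμ1 : ∑ ω, μ ω = 1)
    (Y : Ω → A) (Z : Ω → B) :
    0 ≤ condThc1 α (distOf μ (fun ω => (Y ω, Z ω))) := by
  set p := distOf μ (fun ω => (Y ω, Z ω)) with hpdef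
  have hp : ∀ x, 0 ≤ p x := distOf_nonneg hμ _
  refine Finset.sum_nonneg fun b _ => ?_
  rcases eq_or_lt_of_le (Finset.sum_nonneg fun a _ => hp (a, b)) with hb | hb
  · rw [← hb, Real.zero_rpow (alpha_ne_zero hα), zero_mul]
  · refine mul_nonneg (Real.rpow_nonneg (Finset.sum_nonneg fun a _ => hp (a, b)) α) ?_
    refine thc_nonneg hα _ (fun a => div_nonneg (hp (a, b)) hb.le) ?_
    rw [← Finset.sum_div, div_self hb.ne']

end Chain

section SSA

variable {A B C : Type*} [Fintype A] [Fintype B] [Fintype C]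
  [DecidableEq A] [DecidableEq B] [DecidableEq C] {α : ℝ}

lemma cond1_SSA (hα : 1 ≤ α) (P : A × (B × C) → ℝ) (hP : ∀ x, 0 ≤ P x) :
    condThc1 α P ≤ condThc1 α (fun ac : A × C => ∑ b, P (ac.1, (b, ac.2))) := by
  have hα0 : α ≠ 0 := alpha_ne_zero hα
  unfold condThc1
  rw [Fintype.sum_prod_type_right]
  apply Finset.sum_le_sum
  intro c _
  simp only []
  have hpBC : ∀ b, 0 ≤ ∑ a, P (a, (b, c)) := fun b => Finset.sum_nonneg fun a _ => hP _
  have hsum_comm : (∑ a, ∑ b, P (a, (b, c))) = ∑ b, ∑ a, P (a, (b, c)) := Finset.sum_comm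
  rw [hsum_comm]
  set PC := ∑ b, ∑ a, P (a, (b, c)) with hPCdef
  have hPC0 : 0 ≤ PC := Finset.sum_nonneg fun b _ => hpBC b
  rcases eq_or_lt_of_le hPC0 with hPC | hPC
  · have hb0 : ∀ b, (∑ a, P (a, (b, c))) = 0 := fun b =>
      (Finset.sum_eq_zero_iff_of_nonneg (fun b _ => hpBC b)).mp hPC.symm b (mem_univ b)
    simp only [hb0, Real.zero_rpow hα0, zero_mul, Finset.sum_const_zero, ← hPCdef, ← hPC,
      le_refl]
  · have hPCne : PC ≠ 0 := hPC.ne'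
    have hwle : ∀ b, (∑ a, P (a, (b, c))) ≤ PC := fun b =>
      Finset.single_le_sum (fun b _ => hpBC b) (mem_univ b)
    have hwsum : ∑ b, (∑ a, P (a, (b, c))) / PC = 1 := by
      rw [← Finset.sum_div, ← hPCdef, div_self hPCne]
    calc ∑ b, (∑ x, P (x, (b, c))) ^ α *
          thc α (fun x => P (x, (b, c)) / ∑ x', P (x', (b, c)))
        ≤ ∑ b, PC ^ α * (((∑ x, P (x, (b, c))) / PC) *
            thc α (fun x => P (x, (b, c)) / ∑ x', P (x', (b, c)))) := by
          apply Finset.sum_le_sum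
          intro b _
          rcases eq_or_lt_of_le (hpBC b) with hb | hb
          · rw [← hb, Real.zero_rpow hα0, zero_mul, zero_div, zero_mul, mul_zero]
          · have hth : 0 ≤ thc α (fun x => P (x, (b, c)) / ∑ x', P (x', (b, c))) :=
              thc_nonneg hα _ (fun a => div_nonneg (hP _) hb.le)
                (by rw [← Finset.sum_div, div_self hb.ne'])
            have hw1 : (∑ x, P (x, (b, c))) / PC ≤ 1 := by
              rw [div_le_one hPC]; exact hwle b
            have heq : (∑ x, P (x, (b, c))) ^ α = ((∑ x, P (x, (b, c))) / PC) ^ α * PC ^ α := by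
              rw [← Real.mul_rpow (div_nonneg (hpBC b) hPC0) hPC0, div_mul_cancel₀ _ hPCne]
            rw [heq, mul_comm (((∑ x, P (x, (b, c))) / PC) ^ α) (PC ^ α), mul_assoc]
            refine mul_le_mul_of_nonneg_left ?_ (Real.rpow_nonneg hPC0 α)
            exact mul_le_mul_of_nonneg_right
              (rpow_le_self hα (div_nonneg (hpBC b) hPC0) hw1) hth
      _ = PC ^ α * ∑ b, ((∑ x, P (x, (b, c))) / PC) *
            thc α (fun x => P (x, (b, c)) / ∑ x', P (x', (b, c))) := by
          rw [Finset.mul_sum]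
      _ ≤ PC ^ α * thc α (fun x => (∑ b, P (x, (b, c))) / PC) := by
          refine mul_le_mul_of_nonneg_left ?_ (Real.rpow_nonneg hPC0 α)
          have hstep : ∀ b, ((∑ x, P (x, (b, c))) / PC) *
              thc α (fun x => P (x, (b, c)) / ∑ x', P (x', (b, c)))
              = ∑ a, ((∑ x, P (x, (b, c))) / PC) *
                  gfun α (P (a, (b, c)) / ∑ x', P (x', (b, c))) := by
            intro b
            rcases eq_or_lt_of_le (hpBC b) with hb | hb
            · have hz : ∀ a, P (a, (b, c)) = 0 := fun a =>
                (Finset.sum_eq_zero_iff_of_nonneg (fun x _ => hP _)).mp hb.symm a (mem_univ a)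
              simp [hz, gfun_zero hα]
            · rw [thc_eq_sum_gfun hα _ (by rw [← Finset.sum_div, div_self hb.ne']),
                Finset.mul_sum]
          simp_rw [hstep]
          rw [Finset.sum_comm]
          have hcond1 : ∑ a, (∑ b, P (a, (b, c))) / PC = 1 := by
            rw [← Finset.sum_div]
            rw [show (∑ a, ∑ b, P (a, (b, c))) = PC by rw [hPCdef]; exact Finset.sum_comm]
            exact div_self hPCne
          rw [thc_eq_sum_gfun hα _ hcond1]
          apply Finset.sum_le_sum
          intro a _
          have hch : (∑ b, P (a, (b, c))) / PC
              = ∑ b, ((∑ x, P (x, (b, c))) / PC) * (P (a, (b, c)) / ∑ x', P (x', (b, c))) := by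
            rw [Finset.sum_div]
            apply Finset.sum_congr rfl
            intro b _
            rcases eq_or_lt_of_le (hpBC b) with hb | hb
            · have hz : P (a, (b, c)) = 0 :=
                (Finset.sum_eq_zero_iff_of_nonneg (fun x _ => hP _)).mp hb.symm a (mem_univ a)
              simp [hz]
            · field_simp
          calc ∑ b, ((∑ x, P (x, (b, c))) / PC) *
                gfun α (P (a, (b, c)) / ∑ x', P (x', (b, c)))
              ≤ gfun α (∑ b, ((∑ x, P (x, (b, c))) / PC) *
                  (P (a, (b, c)) / ∑ x', P (x', (b, c)))) := by
                have hj := (gfun_concave hα).le_map_sum (t := univ)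
                  (w := fun b => (∑ x, P (x, (b, c))) / PC)
                  (p := fun b => P (a, (b, c)) / ∑ x', P (x', (b, c)))
                  (fun b _ => div_nonneg (hpBC b) hPC0) hwsum
                  (fun b _ => Set.mem_Ici.mpr (div_nonneg (hP _) (hpBC b)))
                simpa [smul_eq_mul] using hj
            _ = gfun α ((∑ b, P (a, (b, c))) / PC) := by rw [← hch]

end SSA

section Shearer

variable {Ω : Type*} [Fintype Ω] {n : ℕ} {S : Fin n → Type*}
  [∀ i, Fintype (S i)] [∀ i, DecidableEq (S i)]
  (μ : Ω → ℝ) (X : ∀ i : Fin n, Ω → S i) (α : ℝ)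

noncomputable def fset (T : Finset (Fin n)) : ℝ :=
  thc α (distOf μ (fun ω => fun j : T => X j.1 ω))

lemma cond_diff (hα : 1 ≤ α) (hμ : ∀ ω, 0 ≤ μ ω) {j : Fin n} {T : Finset (Fin n)}
    (hj : j ∉ T) :
    fset μ X α (insert j T) = fset μ X α T +
      condThc1 α (distOf μ (fun ω => (X j ω, fun t : T => X t.1 ω))) := by
  have hcr := chain_rule hα (distOf μ (fun ω => (X j ω, fun t : T => X t.1 ω)))
    (distOf_nonneg hμ _)
  have hmarg : (fun b => ∑ a, distOf μ (fun ω => (X j ω, fun t : T => X t.1 ω)) (a, b))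
      = distOf μ (fun ω => fun t : T => X t.1 ω) := by
    funext b; exact distOf_fst_marginal _ _ b
  rw [hmarg] at hcr
  have hinj : Function.Injective
      (fun v : (∀ t : (insert j T : Finset (Fin n)), S t.1) =>
        (v ⟨j, Finset.mem_insert_self j T⟩,
         fun t : T => v ⟨t.1, Finset.mem_insert_of_mem t.2⟩)) := by
    intro v w h
    have h1 : v ⟨j, Finset.mem_insert_self j T⟩ = w ⟨j, Finset.mem_insert_self j T⟩ :=
      congrArg Prod.fst h
    have h2 := congrArg Prod.snd h
    funext t
    rcases Finset.mem_insert.mp t.2 with ht | ht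
    · have e : t = ⟨j, Finset.mem_insert_self j T⟩ := Subtype.ext ht
      rw [e]; exact h1
    · exact congrFun h2 ⟨t.1, ht⟩
  have h1 : fset μ X α (insert j T)
      = thc α (distOf μ (fun ω => (X j ω, fun t : T => X t.1 ω))) :=
    (thc_comp_inj hα _ hinj (fun ω => fun t : (insert j T : Finset (Fin n)) => X t.1 ω)).symm
  rw [h1, hcr]
  rfl

lemma fset_empty (hμ1 : ∑ ω, μ ω = 1) : fset μ X α ∅ = 0 := by
  haveI : Unique (∀ t : ((∅ : Finset (Fin n)) : Finset (Fin n)), S t.1) :=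
    { default := fun t => absurd t.2 (Finset.notMem_empty t.1)
      uniq := fun v => funext fun t => absurd t.2 (Finset.notMem_empty t.1) }
  have hdist : ∀ s, distOf μ (fun ω => fun t : ((∅ : Finset (Fin n)) : Finset (Fin n)) =>
      X t.1 ω) s = 1 := by
    intro s
    unfold distOf
    rw [Finset.filter_true_of_mem (fun ω _ => Subsingleton.elim _ _), hμ1]
  unfold fset thc
  split
  · simp [hdist]
  · simp [hdist, Real.one_rpow, Finset.card_univ]

lemma fset_mono (hα : 1 ≤ α) (hμ : ∀ ω, 0 ≤ μ ω) (hμ1 : ∑ ω, μ ω = 1)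
    {j : Fin n} {T : Finset (Fin n)} (hj : j ∉ T) :
    fset μ X α T ≤ fset μ X α (insert j T) := by
  rw [cond_diff μ X α hα hμ hj]
  have := cond1_nonneg hα μ hμ hμ1 (X j) (fun ω => fun t : T => X t.1 ω)
  linarith

lemma fset_submod (hα : 1 ≤ α) (hμ : ∀ ω, 0 ≤ μ ω) (hμ1 : ∑ ω, μ ω = 1)
    {j : Fin n} {A B : Finset (Fin n)} (hAB : A ⊆ B) (hjB : j ∉ B) :
    fset μ X α (insert j B) - fset μ X α B ≤ fset μ X α (insert j A) - fset μ X α A := by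
  have hjA : j ∉ A := fun h => hjB (hAB h)
  rw [cond_diff μ X α hα hμ hjA]
  set W : Ω → (S j) × ((∀ t : (B \ A : Finset (Fin n)), S t.1) × (∀ t : A, S t.1)) :=
    fun ω => (X j ω, ((fun t : (B \ A : Finset (Fin n)) => X t.1 ω),
      (fun t : A => X t.1 ω))) with hW
  have hB : fset μ X α (insert j B) = fset μ X α B + condThc1 α (distOf μ W) := by
    have hcr := chain_rule hα (distOf μ W) (distOf_nonneg hμ _)
    have hmarg : (fun b => ∑ a, distOf μ W (a, b))
        = distOf μ (fun ω => ((fun t : (B \ A : Finset (Fin n)) => X t.1 ω),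
            (fun t : A => X t.1 ω))) := by
      funext b; exact distOf_fst_marginal _ _ b
    rw [hmarg] at hcr
    have hχ : Function.Injective
        (fun v : (∀ t : (insert j B : Finset (Fin n)), S t.1) =>
          (v ⟨j, Finset.mem_insert_self j B⟩,
           ((fun t : (B \ A : Finset (Fin n)) =>
              v ⟨t.1, Finset.mem_insert_of_mem (Finset.mem_sdiff.mp t.2).1⟩),
            (fun t : A => v ⟨t.1, Finset.mem_insert_of_mem (hAB t.2)⟩)))) := by
      intro v w h
      have h1 : v ⟨j, Finset.mem_insert_self j B⟩ = w ⟨j, Finset.mem_insert_self j B⟩ :=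
        congrArg Prod.fst h
      have h2 := congrArg (fun q => q.2.1) h
      have h3 := congrArg (fun q => q.2.2) h
      funext t
      rcases Finset.mem_insert.mp t.2 with ht | ht
      · have e : t = ⟨j, Finset.mem_insert_self j B⟩ := Subtype.ext ht
        rw [e]; exact h1
      · by_cases htA : t.1 ∈ A
        · exact congrFun h3 ⟨t.1, htA⟩
        · exact congrFun h2 ⟨t.1, Finset.mem_sdiff.mpr ⟨ht, htA⟩⟩
    have hψ : Function.Injective
        (fun v : (∀ t : B, S t.1) =>
          ((fun t : (B \ A : Finset (Fin n)) => v ⟨t.1, (Finset.mem_sdiff.mp t.2).1⟩),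
           (fun t : A => v ⟨t.1, hAB t.2⟩))) := by
      intro v w h
      have h2 := congrArg Prod.fst h
      have h3 := congrArg Prod.snd h
      funext t
      by_cases htA : t.1 ∈ A
      · exact congrFun h3 ⟨t.1, htA⟩
      · exact congrFun h2 ⟨t.1, Finset.mem_sdiff.mpr ⟨t.2, htA⟩⟩
    have h1 : fset μ X α (insert j B) = thc α (distOf μ W) :=
      (thc_comp_inj hα _ hχ (fun ω => fun t : (insert j B : Finset (Fin n)) => X t.1 ω)).symm
    have h2 : thc α (distOf μ (fun ω => ((fun t : (B \ A : Finset (Fin n)) => X t.1 ω),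
        (fun t : A => X t.1 ω)))) = fset μ X α B :=
      thc_comp_inj hα _ hψ (fun ω => fun t : B => X t.1 ω)
    rw [h1, hcr, h2]
  rw [hB]
  have hssa := cond1_SSA hα (distOf μ W) (distOf_nonneg hμ _)
  have hQ : (fun ac : (S j) × (∀ t : A, S t.1) => ∑ b, distOf μ W (ac.1, (b, ac.2)))
      = distOf μ (fun ω => (X j ω, fun t : A => X t.1 ω)) := by
    funext ac
    obtain ⟨a, c⟩ := ac
    have hsh : ∀ b, distOf μ W (a, (b, c))
        = distOf μ (fun ω => ((fun t : (B \ A : Finset (Fin n)) => X t.1 ω),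
            (X j ω, fun t : A => X t.1 ω))) (b, (a, c)) := by
      intro b
      apply distOf_congr
      intro ω
      simp only [hW, Prod.ext_iff]
      tauto
    simp_rw [hsh]
    exact distOf_fst_marginal _ _ (a, c)
  rw [hQ] at hssa
  linarith

end Shearer

/-- **THC-entropy Shearer lemma.** Let `X = (X₁, …, Xₙ)` take values in a
finite product set, and let `𝓖 = {G₁, …, G_m}` be a family of subsets of `{1, …, n}` such
that every `j` belongs to at least `k` members.  Then for every `α ≥ 1`:
`k · H_α(X) ≤ Σ_{G ∈ 𝓖} H_α(X(G))`. -/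
theorem thc_shearer {Ω : Type*} [Fintype Ω] (n m k : ℕ) (S : Fin n → Type*)
    [∀ i, Fintype (S i)] [∀ i, DecidableEq (S i)]
    (μ : Ω → ℝ) (hμ : ∀ ω, 0 ≤ μ ω) (hμ1 : ∑ ω, μ ω = 1)
    (X : ∀ i : Fin n, Ω → S i)
    (G : Fin m → Finset (Fin n))
    (hcov : ∀ j : Fin n, k ≤ (Finset.univ.filter (fun i => j ∈ G i)).card)
    (α : ℝ) (hα : 1 ≤ α) :
    (k : ℝ) * thc α (distOf μ (fun ω => fun j : Fin n => X j ω)) ≤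
      ∑ i : Fin m, thc α (distOf μ (fun ω => fun j : (G i : Finset (Fin n)) => X j.1 ω)) := by
  classical
  have hful : thc α (distOf μ (fun ω => fun j : Fin n => X j ω)) = fset μ X α univ := by
    have hinj : Function.Injective
        (fun v : (∀ j : Fin n, S j) => fun t : (univ : Finset (Fin n)) => v t.1) := by
      intro v w h
      funext j
      exact congrFun h ⟨j, mem_univ j⟩
    exact (thc_comp_inj hα _ hinj (fun ω => fun j : Fin n => X j ω)).symm
  rw [hful]
  show (k : ℝ) * fset μ X α univ ≤ ∑ i : Fin m, fset μ X α (G i)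
  set NF : ℕ → Finset (Fin n) := fun t => univ.filter (fun i : Fin n => (i : ℕ) < t) with hNF
  have hNFins : ∀ j : Fin n, insert j (NF (j : ℕ)) = NF ((j : ℕ) + 1) := by
    intro j
    ext i
    simp only [hNF, Finset.mem_insert, Finset.mem_filter, Finset.mem_univ, true_and,
      Fin.ext_iff]
    omega
  have hNFnotmem : ∀ j : Fin n, j ∉ NF (j : ℕ) := by
    intro j
    simp [hNF]
  have hNF0 : NF 0 = ∅ := by ext i; simp [hNF]
  have hNFn : NF n = univ := by ext i; simp [hNF, i.isLt]
  set D : ℕ → ℝ := fun t => fset μ X α (NF (t + 1)) - fset μ X α (NF t) with hD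
  have hDnn : ∀ j : Fin n, 0 ≤ D (j : ℕ) := by
    intro j
    have hm := fset_mono μ X α hα hμ hμ1 (hNFnotmem j)
    rw [hNFins j] at hm
    simp only [hD]
    linarith
  have htel : ∑ j : Fin n, D (j : ℕ) = fset μ X α univ := by
    rw [Fin.sum_univ_eq_sum_range (fun t => D t) n]
    simp only [hD]
    rw [Finset.sum_range_sub (f := fun t => fset μ X α (NF t)) (n := n), hNFn, hNF0,
      fset_empty μ X α hμ1, sub_zero]
  have key : ∀ T : Finset (Fin n), ∑ j ∈ T, D (j : ℕ) ≤ fset μ X α T := by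
    intro T
    induction T using Finset.induction_on_max with
    | empty => simpa using (fset_empty μ X α hμ1).ge
    | insert a s hmax ih =>
      have has : a ∉ s := fun h => lt_irrefl a (hmax a h)
      rw [Finset.sum_insert has]
      have hsub : s ⊆ NF (a : ℕ) := by
        intro x hx
        simp only [hNF, Finset.mem_filter, Finset.mem_univ, true_and]
        exact hmax x hx
      have hsubmod := fset_submod μ X α hα hμ hμ1 hsub (hNFnotmem a)
      rw [hNFins a] at hsubmod
      have hDa : D (a : ℕ) ≤ fset μ X α (insert a s) - fset μ X α s := by
        simp only [hD]
        linarith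
      linarith
  have hswap : ∑ i : Fin m, ∑ j ∈ G i, D (j : ℕ)
      = ∑ j : Fin n, ((univ.filter (fun i => j ∈ G i)).card : ℝ) * D (j : ℕ) := by
    have hiter : ∀ i, ∑ j ∈ G i, D (j : ℕ)
        = ∑ j : Fin n, if j ∈ G i then D (j : ℕ) else 0 := by
      intro i
      rw [Finset.sum_ite_mem, Finset.univ_inter]
    simp_rw [hiter]
    rw [Finset.sum_comm]
    apply Finset.sum_congr rfl
    intro j _
    rw [← Finset.sum_filter, Finset.sum_const, nsmul_eq_mul]
  calc (k : ℝ) * fset μ X α univ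
      = (k : ℝ) * ∑ j : Fin n, D (j : ℕ) := by rw [htel]
    _ = ∑ j : Fin n, (k : ℝ) * D (j : ℕ) := Finset.mul_sum _ _ _
    _ ≤ ∑ j : Fin n, ((univ.filter (fun i => j ∈ G i)).card : ℝ) * D (j : ℕ) :=
        Finset.sum_le_sum fun j _ =>
          mul_le_mul_of_nonneg_right (by exact_mod_cast hcov j) (hDnn j)
    _ = ∑ i : Fin m, ∑ j ∈ G i, D (j : ℕ) := hswap.symm
    _ ≤ ∑ i : Fin m, fset μ X α (G i) := Finset.sum_le_sum fun i _ => key (G i)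
end

section
/- Let N be a finite set, let 𝓕 be a nonempty family of subsets of N, and let 𝓖 = {G₁, …, G_m} be a family of subsets of N such that each element of N appears in at least k members of 𝓖. For each 1 ≤ j ≤ m define 𝓕_j = { F ∩ G_j : F ∈ 𝓕 }. Then for every α ≥ 1: k · ln_α|𝓕| ≤ Σ_{j=1}^m ln_α|𝓕_j|. -/
open Finset

lemma geom_superadd {ι : Type*} {s : Finset ι} (hs : s.Nonempty) (a b : ι → ℝ)
    (ha : ∀ j ∈ s, 0 < a j) (hb : ∀ j ∈ s, 0 < b j) :
    (∏ j ∈ s, a j) ^ ((s.card : ℝ)⁻¹) + (∏ j ∈ s, b j) ^ ((s.card : ℝ)⁻¹)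
      ≤ (∏ j ∈ s, (a j + b j)) ^ ((s.card : ℝ)⁻¹) := by
  set r : ℝ := (s.card : ℝ)⁻¹ with hrdef
  have hcard : (0:ℝ) < s.card := by
    exact_mod_cast Finset.card_pos.2 hs
  have hr0 : 0 ≤ r := by positivity
  have hD : (0:ℝ) < ∏ j ∈ s, (a j + b j) :=
    Finset.prod_pos fun j hj => add_pos (ha j hj) (hb j hj)
  have hsumr : ∑ _j ∈ s, r = 1 := by
    rw [Finset.sum_const, nsmul_eq_mul, hrdef]
    field_simp
  have hab : ∀ j ∈ s, (0:ℝ) < a j + b j := fun j hj => add_pos (ha j hj) (hb j hj)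
  have hAMa := Real.geom_mean_le_arith_mean_weighted s (fun _ => r)
      (fun j => a j / (a j + b j)) (fun _ _ => hr0) hsumr
      (fun j hj => (div_pos (ha j hj) (hab j hj)).le)
  have hAMb := Real.geom_mean_le_arith_mean_weighted s (fun _ => r)
      (fun j => b j / (a j + b j)) (fun _ _ => hr0) hsumr
      (fun j hj => (div_pos (hb j hj) (hab j hj)).le)
  have hprodA : (∏ j ∈ s, (a j / (a j + b j)) ^ r)
      = (∏ j ∈ s, a j) ^ r / (∏ j ∈ s, (a j + b j)) ^ r := by
    rw [Real.finset_prod_rpow s _ (fun j hj => (div_pos (ha j hj) (hab j hj)).le) r,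
      Finset.prod_div_distrib,
      Real.div_rpow (Finset.prod_nonneg fun j hj => (ha j hj).le) hD.le]
  have hprodB : (∏ j ∈ s, (b j / (a j + b j)) ^ r)
      = (∏ j ∈ s, b j) ^ r / (∏ j ∈ s, (a j + b j)) ^ r := by
    rw [Real.finset_prod_rpow s _ (fun j hj => (div_pos (hb j hj) (hab j hj)).le) r,
      Finset.prod_div_distrib,
      Real.div_rpow (Finset.prod_nonneg fun j hj => (hb j hj).le) hD.le]
  have hsum1 : (∑ j ∈ s, r * (a j / (a j + b j))) + (∑ j ∈ s, r * (b j / (a j + b j))) = 1 := by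
    rw [← Finset.sum_add_distrib, ← hsumr]
    apply Finset.sum_congr rfl
    intro j hj
    have h0 : a j + b j ≠ 0 := (hab j hj).ne'
    field_simp
  have hDr : 0 < (∏ j ∈ s, (a j + b j)) ^ r := Real.rpow_pos_of_pos hD r
  have hfrac : (∏ j ∈ s, a j) ^ r / (∏ j ∈ s, (a j + b j)) ^ r
      + (∏ j ∈ s, b j) ^ r / (∏ j ∈ s, (a j + b j)) ^ r ≤ 1 := by
    rw [← hprodA, ← hprodB, ← hsum1]
    exact add_le_add hAMa hAMb
  rw [← add_div, div_le_one hDr] at hfrac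
  exact hfrac

lemma mem_erase_split_inter {N : Type*} [DecidableEq N] (x : N) (F : Finset (Finset N))
    (B : Finset N) :
    B ∈ (F.filter (fun A => x ∉ A)) ∩ ((F.filter (fun A => x ∈ A)).image (fun A => A.erase x))
      ↔ B ∈ F ∧ x ∉ B ∧ insert x B ∈ F := by
  simp only [mem_inter, mem_filter, mem_image]
  constructor
  · rintro ⟨⟨hB, hx⟩, A, ⟨hA, hxA⟩, rfl⟩
    exact ⟨hB, hx, by rwa [Finset.insert_erase hxA]⟩
  · rintro ⟨hB, hx, hiB⟩
    exact ⟨⟨hB, hx⟩, insert x B, ⟨hiB, Finset.mem_insert_self _ _⟩, by rw [Finset.erase_insert hx]⟩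

lemma card_erase_split {N : Type*} [DecidableEq N] (x : N) (F : Finset (Finset N)) :
    F.card = (F.image (fun A => A.erase x)).card +
      ((F.filter (fun A => x ∉ A)) ∩
        ((F.filter (fun A => x ∈ A)).image (fun A => A.erase x))).card := by
  have himg : F.image (fun A => A.erase x)
      = (F.filter (fun A => x ∉ A)) ∪ ((F.filter (fun A => x ∈ A)).image (fun A => A.erase x)) := by
    ext B
    simp only [mem_image, mem_union, mem_filter]
    constructor
    · rintro ⟨A, hA, rfl⟩
      by_cases hx : x ∈ A
      · exact Or.inr ⟨A, ⟨hA, hx⟩, rfl⟩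
      · rw [Finset.erase_eq_of_notMem hx]
        exact Or.inl ⟨hA, hx⟩
    · rintro (⟨hB, hx⟩ | ⟨A, ⟨hA, _⟩, rfl⟩)
      · exact ⟨B, hB, Finset.erase_eq_of_notMem hx⟩
      · exact ⟨A, hA, rfl⟩
  have hinj : ((F.filter (fun A => x ∈ A)).image (fun A => A.erase x)).card
      = (F.filter (fun A => x ∈ A)).card := by
    apply Finset.card_image_of_injOn
    intro A hA B hB h
    simp only at h
    have hxA : x ∈ A := (Finset.mem_filter.1 (Finset.mem_coe.1 hA)).2
    have hxB : x ∈ B := (Finset.mem_filter.1 (Finset.mem_coe.1 hB)).2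
    rw [← Finset.insert_erase hxA, ← Finset.insert_erase hxB, h]
  rw [himg, Finset.card_union_add_card_inter, hinj]
  rw [add_comm]
  exact (Finset.card_filter_add_card_filter_not (p := fun A => x ∈ A)).symm

lemma shearer_num {ι : Type*} [Fintype ι] [DecidableEq ι] {k : ℕ} (hk : 1 ≤ k) (T : Finset ι) (hT : k ≤ T.card)
    (a b c : ι → ℝ) (ha : ∀ j, 1 ≤ a j) (hb : ∀ j, 1 ≤ b j) (hba : ∀ j, b j ≤ a j)
    (hcT : ∀ j ∈ T, a j + b j ≤ c j) (hc : ∀ j, a j ≤ c j)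
    {A B : ℝ} (hA : 0 ≤ A) (hB : 0 ≤ B)
    (hAk : A ^ k ≤ ∏ j, a j) (hBk : B ^ k ≤ ∏ j, b j) :
    (A + B) ^ k ≤ ∏ j, c j := by
  obtain ⟨T', hT'T, hT'card⟩ := Finset.exists_subset_card_eq hT
  have hkne : k ≠ 0 := by omega
  set r : ℝ := (k : ℝ)⁻¹ with hrdef
  have hr0 : 0 ≤ r := by positivity
  have ha0 : ∀ j, (0:ℝ) < a j := fun j => lt_of_lt_of_le one_pos (ha j)
  have hb0 : ∀ j, (0:ℝ) < b j := fun j => lt_of_lt_of_le one_pos (hb j)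
  have hc0 : ∀ j, (0:ℝ) < c j := fun j => lt_of_lt_of_le (ha0 j) (hc j)
  have hprodc0 : (0:ℝ) ≤ ∏ j, c j := Finset.prod_nonneg fun j _ => (hc0 j).le
  have hT'ne : T'.Nonempty := Finset.card_pos.1 (by omega)
  -- superadditivity on T'
  have hsup := geom_superadd hT'ne a b (fun j _ => ha0 j) (fun j _ => hb0 j)
  rw [hT'card] at hsup
  -- pieces
  have h1 : A ≤ (∏ j, a j) ^ r := by
    calc A = (A ^ k) ^ r := (Real.pow_rpow_inv_natCast hA hkne).symm
    _ ≤ (∏ j, a j) ^ r := Real.rpow_le_rpow (by positivity) hAk hr0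
  have h2 : B ≤ (∏ j, b j) ^ r := by
    calc B = (B ^ k) ^ r := (Real.pow_rpow_inv_natCast hB hkne).symm
    _ ≤ (∏ j, b j) ^ r := Real.rpow_le_rpow (by positivity) hBk hr0
  have hsplita : (∏ j, a j) = (∏ j ∈ T', a j) * (∏ j ∈ T'ᶜ, a j) :=
    (Finset.prod_mul_prod_compl T' a).symm
  have hsplitb : (∏ j, b j) ≤ (∏ j ∈ T', b j) * (∏ j ∈ T'ᶜ, a j) := by
    rw [← Finset.prod_mul_prod_compl T' b]
    exact mul_le_mul_of_nonneg_left
      (Finset.prod_le_prod (fun j _ => (hb0 j).le) (fun j _ => hba j))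
      (Finset.prod_nonneg fun j _ => (hb0 j).le)
  have hPa : (0:ℝ) ≤ ∏ j ∈ T', a j := Finset.prod_nonneg fun j _ => (ha0 j).le
  have hPb : (0:ℝ) ≤ ∏ j ∈ T', b j := Finset.prod_nonneg fun j _ => (hb0 j).le
  have hPc : (0:ℝ) ≤ ∏ j ∈ T'ᶜ, a j := Finset.prod_nonneg fun j _ => (ha0 j).le
  have h3 : (∏ j, a j) ^ r = (∏ j ∈ T', a j) ^ r * (∏ j ∈ T'ᶜ, a j) ^ r := by
    rw [hsplita, Real.mul_rpow hPa hPc]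
  have h4 : (∏ j, b j) ^ r ≤ (∏ j ∈ T', b j) ^ r * (∏ j ∈ T'ᶜ, a j) ^ r := by
    rw [← Real.mul_rpow hPb hPc]
    exact Real.rpow_le_rpow (Finset.prod_nonneg fun j _ => (hb0 j).le) hsplitb hr0
  have h5 : (∏ j ∈ T', (a j + b j)) * (∏ j ∈ T'ᶜ, a j) ≤ ∏ j, c j := by
    rw [← Finset.prod_mul_prod_compl T' c]
    exact mul_le_mul
      (Finset.prod_le_prod (fun j hj => (add_pos (ha0 j) (hb0 j)).le)
        (fun j hj => hcT j (hT'T hj)))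
      (Finset.prod_le_prod (fun j _ => (ha0 j).le) (fun j _ => hc j))
      hPc (Finset.prod_nonneg fun j _ => (hc0 j).le)
  have key : A + B ≤ (∏ j, c j) ^ r := by
    calc A + B ≤ (∏ j, a j) ^ r + (∏ j, b j) ^ r := add_le_add h1 h2
    _ ≤ ((∏ j ∈ T', a j) ^ r + (∏ j ∈ T', b j) ^ r) * (∏ j ∈ T'ᶜ, a j) ^ r := by
        rw [add_mul, ← h3]; exact add_le_add le_rfl h4
    _ ≤ (∏ j ∈ T', (a j + b j)) ^ r * (∏ j ∈ T'ᶜ, a j) ^ r :=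
        mul_le_mul_of_nonneg_right hsup (Real.rpow_nonneg hPc r)
    _ = ((∏ j ∈ T', (a j + b j)) * (∏ j ∈ T'ᶜ, a j)) ^ r :=
        (Real.mul_rpow (Finset.prod_nonneg fun j _ => (add_pos (ha0 j) (hb0 j)).le) hPc).symm
    _ ≤ (∏ j, c j) ^ r := Real.rpow_le_rpow
        (mul_nonneg (Finset.prod_nonneg fun j _ => (add_pos (ha0 j) (hb0 j)).le) hPc) h5 hr0
  calc (A + B) ^ k ≤ ((∏ j, c j) ^ r) ^ k :=
      pow_le_pow_left₀ (by linarith) key k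
  _ = ∏ j, c j := Real.rpow_inv_natCast_pow hprodc0 hkne

lemma shearer_prod {N : Type*} [Fintype N] [DecidableEq N] {m : ℕ} (k : ℕ) (hk : 1 ≤ k)
    (G : Fin m → Finset N) (S : Finset N) :
    ∀ F : Finset (Finset N), F.Nonempty → (∀ A ∈ F, A ⊆ S) →
      (∀ x ∈ S, k ≤ (Finset.univ.filter (fun j => x ∈ G j)).card) →
      (F.card : ℝ) ^ k ≤ ∏ j : Fin m, ((F.image (fun A => A ∩ G j)).card : ℝ) := by
  induction S using Finset.induction_on with
  | empty =>
      intro F hF hsub _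
      have hFeq : F = {∅} := Finset.eq_singleton_iff_nonempty_unique_mem.mpr
        ⟨hF, fun A hA => Finset.subset_empty.1 (hsub A hA)⟩
      subst hFeq
      simp
  | @insert x S hxS ih =>
      intro F hF hsub hcov
      set F' := F.image (fun A => A.erase x) with hF'def
      set F'' := (F.filter (fun A => x ∉ A)) ∩
        ((F.filter (fun A => x ∈ A)).image (fun A => A.erase x)) with hF''def
      have hcard : F.card = F'.card + F''.card := card_erase_split x F
      have hF'ne : F'.Nonempty := hF.image _
      have hF'sub : ∀ A ∈ F', A ⊆ S := by
        intro B hB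
        obtain ⟨A, hA, rfl⟩ := Finset.mem_image.1 hB
        intro y hy
        rcases Finset.mem_insert.1 (hsub A hA (Finset.mem_of_mem_erase hy)) with h | h
        · exact absurd (h ▸ Finset.mem_erase.1 hy).1 (by simp [h])
        · exact h
      have hcovS : ∀ y ∈ S, k ≤ (Finset.univ.filter (fun j => y ∈ G j)).card :=
        fun y hy => hcov y (Finset.mem_insert_of_mem hy)
      -- erase commutes with trace
      have key_a_erase : ∀ j : Fin m, F'.image (fun A => A ∩ G j)
          = (F.image (fun A => A ∩ G j)).image (fun B => B.erase x) := by
        intro j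
        rw [hF'def, Finset.image_image, Finset.image_image]
        apply Finset.image_congr
        intro A _
        simp only [Function.comp]
        ext y
        simp only [Finset.mem_inter, Finset.mem_erase]
        tauto
      have key_a_le : ∀ j : Fin m,
          (F'.image (fun A => A ∩ G j)).card ≤ (F.image (fun A => A ∩ G j)).card := by
        intro j
        rw [key_a_erase j]
        exact Finset.card_image_le
      have hF''F' : F'' ⊆ F' := by
        intro B hB
        rw [hF''def, mem_erase_split_inter] at hB
        exact Finset.mem_image.2 ⟨B, hB.1, Finset.erase_eq_of_notMem hB.2.1⟩
      have key_b_le : ∀ j : Fin m,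
          (F''.image (fun A => A ∩ G j)).card ≤ (F'.image (fun A => A ∩ G j)).card :=
        fun j => Finset.card_le_card (Finset.image_subset_image hF''F')
      have key_ab : ∀ j : Fin m, x ∈ G j →
          (F'.image (fun A => A ∩ G j)).card + (F''.image (fun A => A ∩ G j)).card
            ≤ (F.image (fun A => A ∩ G j)).card := by
        intro j hxj
        set Fj := F.image (fun A => A ∩ G j) with hFjdef
        rw [card_erase_split x Fj, ← key_a_erase j]
        have hsub2 : F''.image (fun A => A ∩ G j) ⊆
            (Fj.filter (fun A => x ∉ A)) ∩
              ((Fj.filter (fun A => x ∈ A)).image (fun A => A.erase x)) := by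
          intro B' hB'
          obtain ⟨B, hB, rfl⟩ := Finset.mem_image.1 hB'
          rw [hF''def, mem_erase_split_inter] at hB
          rw [mem_erase_split_inter]
          refine ⟨Finset.mem_image.2 ⟨B, hB.1, rfl⟩, fun hx => hB.2.1 (Finset.mem_inter.1 hx).1, ?_⟩
          have : insert x (B ∩ G j) = (insert x B) ∩ G j := by
            ext y
            simp only [Finset.mem_insert, Finset.mem_inter]
            constructor
            · rintro (rfl | ⟨h1, h2⟩)
              · exact ⟨Or.inl rfl, hxj⟩
              · exact ⟨Or.inr h1, h2⟩
            · rintro ⟨rfl | h1, h2⟩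
              · exact Or.inl rfl
              · exact Or.inr ⟨h1, h2⟩
          rw [this]
          exact Finset.mem_image.2 ⟨insert x B, hB.2.2, rfl⟩
        exact Nat.add_le_add_left (Finset.card_le_card hsub2) _
      rcases F''.eq_empty_or_nonempty with hF''e | hF''ne
      · -- F'' empty : F.card = F'.card
        have hcard' : F.card = F'.card := by rw [hcard, hF''e]; simp
        rw [hcard']
        calc ((F'.card : ℝ)) ^ k ≤ ∏ j : Fin m, ((F'.image (fun A => A ∩ G j)).card : ℝ) :=
            ih F' hF'ne hF'sub hcovS
        _ ≤ ∏ j : Fin m, ((F.image (fun A => A ∩ G j)).card : ℝ) :=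
            Finset.prod_le_prod (fun j _ => Nat.cast_nonneg _)
              (fun j _ => by exact_mod_cast key_a_le j)
      · -- F'' nonempty
        have hF''sub : ∀ B ∈ F'', B ⊆ S := by
          intro B hB
          rw [hF''def, mem_erase_split_inter] at hB
          intro y hy
          rcases Finset.mem_insert.1 (hsub B hB.1 hy) with h | h
          · exact absurd (h ▸ hy) hB.2.1
          · exact h
        have IHa := ih F' hF'ne hF'sub hcovS
        have IHb := ih F'' hF''ne hF''sub hcovS
        have hT : k ≤ (Finset.univ.filter (fun j => x ∈ G j)).card :=
          hcov x (Finset.mem_insert_self x S)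
        have hmain := shearer_num hk (Finset.univ.filter (fun j => x ∈ G j)) hT
          (fun j => ((F'.image (fun A => A ∩ G j)).card : ℝ))
          (fun j => ((F''.image (fun A => A ∩ G j)).card : ℝ))
          (fun j => ((F.image (fun A => A ∩ G j)).card : ℝ))
          (fun j => by
            show (1:ℝ) ≤ ((F'.image (fun A => A ∩ G j)).card : ℝ)
            exact_mod_cast Finset.card_pos.2 (hF'ne.image _))
          (fun j => by
            show (1:ℝ) ≤ ((F''.image (fun A => A ∩ G j)).card : ℝ)
            exact_mod_cast Finset.card_pos.2 (hF''ne.image _))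
          (fun j => by
            show ((F''.image (fun A => A ∩ G j)).card : ℝ) ≤ ((F'.image (fun A => A ∩ G j)).card : ℝ)
            exact_mod_cast key_b_le j)
          (fun j hj => by
            have hxj : x ∈ G j := (Finset.mem_filter.1 hj).2
            show ((F'.image (fun A => A ∩ G j)).card : ℝ) + ((F''.image (fun A => A ∩ G j)).card : ℝ)
              ≤ ((F.image (fun A => A ∩ G j)).card : ℝ)
            exact_mod_cast key_ab j hxj)
          (fun j => by
            show ((F'.image (fun A => A ∩ G j)).card : ℝ) ≤ ((F.image (fun A => A ∩ G j)).card : ℝ)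
            exact_mod_cast key_a_le j)
          (Nat.cast_nonneg _) (Nat.cast_nonneg _) IHa IHb
        have : (F.card : ℝ) = (F'.card : ℝ) + (F''.card : ℝ) := by
          rw [hcard]; push_cast; ring
        rw [this]
        exact hmain

lemma alphaLog_one_eq (α : ℝ) : alphaLog α 1 = 0 := by
  unfold alphaLog
  split_ifs with h
  · simp
  · rw [Real.one_rpow]
    simp

lemma alphaLog_eq_exp {α : ℝ} (hα : 1 < α) {ξ : ℝ} (hξ : 0 < ξ) :
    alphaLog α ξ = (1 - Real.exp ((1 - α) * Real.log ξ)) / (α - 1) := by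
  unfold alphaLog
  rw [if_neg (by linarith), Real.rpow_def_of_pos hξ]
  rw [mul_comm (Real.log ξ) (1 - α)]
  rw [div_eq_div_iff (sub_ne_zero.2 (by linarith)) (sub_ne_zero.2 (by linarith))]
  ring

/-- Let `N` be a finite set, `𝓕` a nonempty family of subsets of `N`, and
`G₁, …, G_m` a family of subsets of `N` such that each element of `N` appears in at least
`k` of the `G j`.  With `𝓕_j = {F ∩ G j : F ∈ 𝓕}`, for every `α ≥ 1`:
`k · ln_α |𝓕| ≤ Σ_j ln_α |𝓕_j|`. -/
theorem alphaLog_shearer {N : Type*} [Fintype N] [DecidableEq N]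
    (m k : ℕ) (F : Finset (Finset N)) (hF : F.Nonempty)
    (G : Fin m → Finset N)
    (hcov : ∀ x : N, k ≤ (Finset.univ.filter (fun j => x ∈ G j)).card)
    (α : ℝ) (hα : 1 ≤ α) :
    (k : ℝ) * alphaLog α (F.card : ℝ) ≤
      ∑ j : Fin m, alphaLog α (((F.image (fun A => A ∩ G j)).card : ℕ) : ℝ) := by
  have hnj1 : ∀ j : Fin m, 1 ≤ (F.image (fun A => A ∩ G j)).card :=
    fun j => Finset.card_pos.2 (hF.image _)
  have hjn : ∀ j : Fin m, (F.image (fun A => A ∩ G j)).card ≤ F.card :=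
    fun j => Finset.card_image_le
  have hnjpos : ∀ j : Fin m, (0:ℝ) < ((F.image (fun A => A ∩ G j)).card : ℝ) :=
    fun j => by exact_mod_cast hnj1 j
  rcases Nat.eq_zero_or_pos k with hk0 | hk
  · subst hk0
    simp only [Nat.cast_zero, zero_mul]
    exact Finset.sum_nonneg fun j _ => alphaLog_nonneg hα (by exact_mod_cast hnj1 j)
  have hFpos : (0:ℝ) < (F.card : ℝ) := by exact_mod_cast hF.card_pos
  have hshear : ((F.card : ℝ)) ^ k ≤ ∏ j : Fin m, ((F.image (fun A => A ∩ G j)).card : ℝ) :=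
    shearer_prod k hk G Finset.univ F hF (fun A _ => Finset.subset_univ A) (fun x _ => hcov x)
  have hlog : (k:ℝ) * Real.log (F.card : ℝ)
      ≤ ∑ j : Fin m, Real.log ((F.image (fun A => A ∩ G j)).card : ℝ) := by
    have h1 := Real.log_le_log (by positivity) hshear
    rwa [Real.log_pow, Real.log_prod (fun j _ => (hnjpos j).ne')] at h1
  rcases eq_or_lt_of_le hα with h1 | h1
  · subst h1
    simpa [alphaLog] using hlog
  · by_cases hn1 : F.card = 1
    · have hj1 : ∀ j : Fin m, (F.image (fun A => A ∩ G j)).card = 1 :=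
        fun j => le_antisymm (hn1 ▸ hjn j) (hnj1 j)
      simp only [hn1, hj1, Nat.cast_one, alphaLog_one_eq, mul_zero, Finset.sum_const_zero, le_refl]
    have hn2 : (1:ℝ) < (F.card : ℝ) := by
      have h := hF.card_pos
      have : 2 ≤ F.card := by omega
      exact_mod_cast by omega
    set L : ℝ := Real.log (F.card : ℝ) with hLdef
    have hL : 0 < L := Real.log_pos hn2
    set E : ℝ := Real.exp ((1 - α) * L) with hEdef
    have hE1 : E ≤ 1 := by
      rw [hEdef]
      apply Real.exp_le_one_iff.2
      apply mul_nonpos_of_nonpos_of_nonneg (by linarith) hL.le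
    have claim : ∀ j : Fin m,
        Real.log ((F.image (fun A => A ∩ G j)).card : ℝ) * (1 - E)
          ≤ L * (1 - Real.exp ((1 - α) * Real.log ((F.image (fun A => A ∩ G j)).card : ℝ))) := by
      intro j
      set Lj : ℝ := Real.log ((F.image (fun A => A ∩ G j)).card : ℝ) with hLjdef
      have hLj0 : 0 ≤ Lj := Real.log_nonneg (by exact_mod_cast hnj1 j)
      have hLjL : Lj ≤ L := Real.log_le_log (hnjpos j) (by exact_mod_cast hjn j)
      have hab1 : Lj / L + (L - Lj) / L = 1 := by field_simp; ring
      have hcx := convexOn_exp.2 (Set.mem_univ ((1 - α) * L)) (Set.mem_univ (0:ℝ))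
        (div_nonneg hLj0 hL.le) (div_nonneg (by linarith) hL.le) hab1
      simp only [smul_eq_mul, mul_zero, add_zero, Real.exp_zero, mul_one] at hcx
      have harg : Lj / L * ((1 - α) * L) = (1 - α) * Lj := by
        field_simp
      rw [harg] at hcx
      have hmul := mul_le_mul_of_nonneg_left hcx hL.le
      have hexpand : L * (Lj / L * Real.exp ((1 - α) * L) + (L - Lj) / L)
          = Lj * E + (L - Lj) := by
        rw [hEdef]
        field_simp
      rw [hexpand] at hmul
      nlinarith [hmul]
    have hrw : ∀ j : Fin m, alphaLog α (((F.image (fun A => A ∩ G j)).card : ℕ) : ℝ)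
        = (1 - Real.exp ((1 - α) * Real.log ((F.image (fun A => A ∩ G j)).card : ℝ))) / (α - 1) :=
      fun j => alphaLog_eq_exp h1 (hnjpos j)
    rw [alphaLog_eq_exp h1 hFpos, Finset.sum_congr rfl (fun j _ => hrw j), ← Finset.sum_div,
      ← mul_div_assoc]
    have core : (k:ℝ) * (1 - E)
        ≤ ∑ j : Fin m, (1 - Real.exp ((1 - α) * Real.log ((F.image (fun A => A ∩ G j)).card : ℝ))) := by
      have hsum1 := Finset.sum_le_sum (fun j (_ : j ∈ Finset.univ) => claim j)
      rw [← Finset.sum_mul, ← Finset.mul_sum] at hsum1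
      have h2 : (k:ℝ) * L * (1 - E)
          ≤ (∑ j : Fin m, Real.log ((F.image (fun A => A ∩ G j)).card : ℝ)) * (1 - E) :=
        mul_le_mul_of_nonneg_right hlog (by linarith)
      have h3 : L * ((k:ℝ) * (1 - E))
          ≤ L * ∑ j : Fin m,
            (1 - Real.exp ((1 - α) * Real.log ((F.image (fun A => A ∩ G j)).card : ℝ))) := by
        nlinarith [h2, hsum1]
      exact le_of_mul_le_mul_left h3 hL
    have hden : (0:ℝ) < α - 1 := by linarith
    exact (div_le_div_iff_of_pos_right hden).2 core
end

section
/- Let A be an n×n matrix with entries in {0,1} such that per(A) ≠ 0, and let r_i ≠ 0 be the number of ones in the i-th row (i = 1, …, n). Then for every α ∈ (0,1): −ln_α(1/per(A)) ≤ Σ_{i=1}^n (1/r_i) Σ_{j=1}^{r_i} ln_α(j). -/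
open Finset

/-- The permanent of a square real matrix. -/
noncomputable def matPerm {n : ℕ} (A : Matrix (Fin n) (Fin n) ℝ) : ℝ :=
  ∑ σ : Equiv.Perm (Fin n), ∏ i, A i (σ i)

namespace BregAux

noncomputable def pS {n : ℕ} (A : Matrix (Fin n) (Fin n) ℝ) : Finset (Equiv.Perm (Fin n)) :=
  Finset.univ.filter (fun σ => ∀ i, A i (σ i) = 1)

lemma mem_pS {n : ℕ} {A : Matrix (Fin n) (Fin n) ℝ} {σ : Equiv.Perm (Fin n)} :
    σ ∈ pS A ↔ ∀ i, A i (σ i) = 1 := by simp [pS]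

noncomputable def rowOnes {n : ℕ} (A : Matrix (Fin n) (Fin n) ℝ) (i : Fin n) : ℕ :=
  (Finset.univ.filter (fun j => A i j = 1)).card

noncomputable def g (s : ℕ) : ℝ := Real.log (Nat.factorial s) / s

lemma mul_g (s : ℕ) : (s : ℝ) * g s = Real.log (Nat.factorial s) := by
  rcases Nat.eq_zero_or_pos s with h | h
  · simp [h, g]
  · rw [g, mul_div_cancel₀]
    exact_mod_cast (Nat.cast_pos.mpr h).ne'

lemma matPerm_eq_card {n : ℕ} (A : Matrix (Fin n) (Fin n) ℝ)
    (h01 : ∀ i j, A i j = 0 ∨ A i j = 1) : matPerm A = ((pS A).card : ℝ) := by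
  unfold matPerm
  have h : ∀ σ : Equiv.Perm (Fin n), (∏ i, A i (σ i)) =
      if (∀ i, A i (σ i) = 1) then (1 : ℝ) else 0 := by
    intro σ
    split_ifs with h
    · exact Finset.prod_eq_one fun i _ => h i
    · push_neg at h
      obtain ⟨i, hi⟩ := h
      refine Finset.prod_eq_zero (Finset.mem_univ i) ?_
      rcases h01 i (σ i) with h0 | h1
      · exact h0
      · exact absurd h1 hi
  simp_rw [h]
  rw [Finset.sum_boole]
  rfl

lemma sum_swapsucc {m : ℕ} {M : Type*} [AddCommMonoid M] (k : Fin (m + 1)) (f : Fin (m + 1) → M) :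
    ∑ x : Fin m, f (Equiv.swap 0 k x.succ) = ∑ y ∈ Finset.univ.erase k, f y := by
  have himg : (Finset.univ : Finset (Fin m)).image (fun x => Equiv.swap 0 k x.succ) =
      Finset.univ.erase k := by
    ext y
    simp only [Finset.mem_image, Finset.mem_univ, true_and, Finset.mem_erase, and_true]
    constructor
    · rintro ⟨x, rfl⟩ h
      have h2 : x.succ = (0 : Fin (m + 1)) := by
        have := congrArg (Equiv.swap 0 k) h
        rwa [Equiv.swap_apply_self, Equiv.swap_apply_right] at this
      exact Fin.succ_ne_zero x h2
    · intro hy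
      have hz : Equiv.swap 0 k y ≠ 0 := by
        intro h
        apply hy
        have := congrArg (Equiv.swap 0 k) h
        rwa [Equiv.swap_apply_self, Equiv.swap_apply_left] at this
      exact ⟨(Equiv.swap 0 k y).pred hz, by rw [Fin.succ_pred, Equiv.swap_apply_self]⟩
  rw [← himg, Finset.sum_image]
  intro a _ b _ h
  exact Fin.succ_injective _ ((Equiv.swap 0 k).injective h)

noncomputable def minor {m : ℕ} (A : Matrix (Fin (m + 1)) (Fin (m + 1)) ℝ) (i k : Fin (m + 1)) :
    Matrix (Fin m) (Fin m) ℝ :=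
  Matrix.of fun j x => A (Equiv.swap 0 i j.succ) (Equiv.swap 0 k x.succ)

lemma rowOnes_minor {m : ℕ} (A : Matrix (Fin (m + 1)) (Fin (m + 1)) ℝ) (i k : Fin (m + 1))
    (j : Fin m) :
    rowOnes (minor A i k) j =
      rowOnes A (Equiv.swap 0 i j.succ) -
        (if A (Equiv.swap 0 i j.succ) k = 1 then 1 else 0) := by
  set x := Equiv.swap 0 i j.succ with hx
  have h1 : rowOnes (minor A i k) j =
      ∑ c : Fin m, (if A x (Equiv.swap 0 k c.succ) = 1 then 1 else 0) := by
    rw [rowOnes, Finset.card_filter]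
    rfl
  rw [h1, sum_swapsucc k (fun y => if A x y = 1 then 1 else 0), ← Finset.card_filter,
    Finset.filter_erase]
  by_cases hk : A x k = 1
  · rw [Finset.card_erase_of_mem (by simp [hk]), if_pos hk]
    rfl
  · rw [Finset.erase_eq_of_notMem (by simp [hk]), if_neg hk]
    rfl

lemma decomposeFin_fst {m : ℕ} (τ : Equiv.Perm (Fin (m + 1))) :
    (Equiv.Perm.decomposeFin τ).1 = τ 0 := by
  conv_rhs => rw [← Equiv.symm_apply_apply Equiv.Perm.decomposeFin τ,
    ← Prod.mk.eta (p := Equiv.Perm.decomposeFin τ)]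
  rw [Equiv.Perm.decomposeFin_symm_apply_zero]

lemma decomposeFin_apply_succ {m : ℕ} (τ : Equiv.Perm (Fin (m + 1))) (j : Fin m) :
    τ j.succ = Equiv.swap 0 (τ 0) (((Equiv.Perm.decomposeFin τ).2 j)).succ := by
  conv_lhs => rw [← Equiv.symm_apply_apply Equiv.Perm.decomposeFin τ,
    ← Prod.mk.eta (p := Equiv.Perm.decomposeFin τ)]
  rw [Equiv.Perm.decomposeFin_symm_apply_succ, decomposeFin_fst]

lemma card_fiber {m : ℕ} (A : Matrix (Fin (m + 1)) (Fin (m + 1)) ℝ) (i k : Fin (m + 1))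
    (hik : A i k = 1) :
    ((pS A).filter (fun σ => σ i = k)).card = (pS (minor A i k)).card := by
  refine Finset.card_bij'
    (fun σ _ => (Equiv.Perm.decomposeFin ((Equiv.swap 0 i).trans σ)).2)
    (fun e _ => (Equiv.swap 0 i).trans (Equiv.Perm.decomposeFin.symm (k, e))) ?_ ?_ ?_ ?_
  · -- maps into pS minor
    intro σ hσ
    obtain ⟨hσS, hσi⟩ := Finset.mem_filter.mp hσ
    have hσS' := mem_pS.mp hσS
    set σ' : Equiv.Perm (Fin (m + 1)) := (Equiv.swap 0 i).trans σ with hσ'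
    have h0 : σ' 0 = k := by
      simp [hσ', Equiv.trans_apply, Equiv.swap_apply_left, hσi]
    rw [mem_pS]
    intro j
    have := decomposeFin_apply_succ σ' j
    rw [h0] at this
    have hval : A (Equiv.swap 0 i j.succ) (σ' j.succ) = 1 := hσS' _
    rw [this] at hval
    exact hval
  · -- maps back into filter
    intro e he
    have heS := mem_pS.mp he
    set σ : Equiv.Perm (Fin (m + 1)) :=
      (Equiv.swap 0 i).trans (Equiv.Perm.decomposeFin.symm (k, e)) with hσ
    have hσi : σ i = k := by
      simp [hσ, Equiv.trans_apply, Equiv.swap_apply_right,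
        Equiv.Perm.decomposeFin_symm_apply_zero]
    refine Finset.mem_filter.mpr ⟨mem_pS.mpr ?_, hσi⟩
    intro x
    have hx : x = Equiv.swap 0 i (Equiv.swap 0 i x) := (Equiv.swap_apply_self _ _ _).symm
    rcases Fin.eq_zero_or_eq_succ (Equiv.swap 0 i x) with h0 | ⟨j, hj⟩
    · have hxi : x = i := by rw [hx, h0, Equiv.swap_apply_left]
      have : σ x = k := by rw [hxi, hσi]
      rw [this, hxi, hik]
    · have hσx : σ x = Equiv.swap 0 k (e j).succ := by
        simp only [hσ, Equiv.trans_apply, hj,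
          Equiv.Perm.decomposeFin_symm_apply_succ]
      rw [hσx, hx, hj]
      exact heS j
  · -- left inverse
    intro σ hσ
    obtain ⟨_, hσi⟩ := Finset.mem_filter.mp hσ
    set σ' : Equiv.Perm (Fin (m + 1)) := (Equiv.swap 0 i).trans σ with hσ'
    have h0 : (Equiv.Perm.decomposeFin σ').1 = k := by
      rw [decomposeFin_fst]
      simp [hσ', Equiv.trans_apply, Equiv.swap_apply_left, hσi]
    show (Equiv.swap 0 i).trans (Equiv.Perm.decomposeFin.symm (k, (Equiv.Perm.decomposeFin σ').2)) = σ
    have h1 : ((k : Fin (m + 1)), (Equiv.Perm.decomposeFin σ').2) = Equiv.Perm.decomposeFin σ' := by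
      rw [← h0]
    rw [h1, Equiv.symm_apply_apply]
    ext x
    simp [hσ', Equiv.trans_apply, Equiv.swap_apply_self]
  · -- right inverse
    intro e he
    have : (Equiv.swap 0 i).trans
        ((Equiv.swap 0 i).trans (Equiv.Perm.decomposeFin.symm (k, e))) =
        Equiv.Perm.decomposeFin.symm (k, e) := by
      ext x
      simp [Equiv.trans_apply, Equiv.swap_apply_self]
    show (Equiv.Perm.decomposeFin ((Equiv.swap 0 i).trans ((Equiv.swap 0 i).trans (Equiv.Perm.decomposeFin.symm (k, e))))).2 = e
    rw [this, Equiv.apply_symm_apply]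

theorem bregman : ∀ (n : ℕ) (A : Matrix (Fin n) (Fin n) ℝ),
    (∀ i j, A i j = 0 ∨ A i j = 1) →
    ((pS A).card : ℝ) * Real.log ((pS A).card) ≤
      ((pS A).card : ℝ) * ∑ x, g (rowOnes A x) := by
  intro n
  induction n with
  | zero =>
      intro A _
      have h1 : (pS A).card = 1 := by
        simp [pS, Finset.filter_true_of_mem, Finset.card_univ]
      simp [h1]
  | succ m ih =>
      intro A h01
      set P : ℕ := (pS A).card with hPdef
      rcases Nat.eq_zero_or_pos P with hP0 | hPpos
      · simp [hP0]
      obtain ⟨σ₀, hσ₀⟩ := Finset.card_pos.mp hPpos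
      have hone : ∀ σ ∈ pS A, ∀ x, A x (σ x) = 1 := fun σ hσ => mem_pS.mp hσ
      have hr1 : ∀ x, 1 ≤ rowOnes A x := by
        intro x
        refine Finset.card_pos.mpr ⟨σ₀ x, ?_⟩
        simp only [Finset.mem_filter, Finset.mem_univ, true_and]
        exact hone σ₀ hσ₀ x
      have hrn : ∀ x, rowOnes A x ≤ m + 1 := fun x =>
        le_trans (Finset.card_filter_le _ _) (by simp)
      set N : Fin (m + 1) → Fin (m + 1) → ℕ :=
        fun i k => ((pS A).filter (fun σ => σ i = k)).card with hN
      set W : Fin (m + 1) → Fin (m + 1) → ℝ :=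
        fun i k => ∑ x ∈ Finset.univ.erase i,
          g (rowOnes A x - if A x k = 1 then 1 else 0) with hW
      have hNsum : ∀ i, ∑ k ∈ Finset.univ.filter (fun k => A i k = 1), N i k = P := by
        intro i
        exact (Finset.card_eq_sum_card_fiberwise (fun σ hσ => by
          simp only [Finset.mem_coe, Finset.mem_filter, Finset.mem_univ, true_and]
          exact hone σ hσ i)).symm
      -- Jensen per row
      have jensen : ∀ i, (P : ℝ) * Real.log P - (P : ℝ) * Real.log (rowOnes A i) ≤
          ∑ k ∈ Finset.univ.filter (fun k => A i k = 1),
            (N i k : ℝ) * Real.log (N i k) := by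
        intro i
        set R : ℝ := (rowOnes A i : ℝ) with hR
        have hRpos : (0 : ℝ) < R := by
          rw [hR]; exact_mod_cast hr1 i
        have hcard : ((Finset.univ.filter (fun k => A i k = 1)).card : ℝ) = R := rfl
        have hsum1 : ∑ _k ∈ Finset.univ.filter (fun k => A i k = 1), R⁻¹ = 1 := by
          rw [Finset.sum_const, nsmul_eq_mul, hcard, mul_inv_cancel₀ hRpos.ne']
        have hjen := Real.convexOn_mul_log.map_sum_le
          (w := fun _ => R⁻¹) (p := fun k => (N i k : ℝ))
          (fun _ _ => by positivity) hsum1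
          (fun k _ => Set.mem_Ici.mpr (Nat.cast_nonneg _))
        simp only [smul_eq_mul] at hjen
        have hsumN : ∑ k ∈ Finset.univ.filter (fun k => A i k = 1), R⁻¹ * (N i k : ℝ)
            = R⁻¹ * P := by
          rw [← Finset.mul_sum]
          congr 1
          exact_mod_cast hNsum i
        rw [hsumN] at hjen
        have hPposR : (0 : ℝ) < (P : ℝ) := by exact_mod_cast hPpos
        have hlogmul : Real.log (R⁻¹ * (P : ℝ)) = -Real.log R + Real.log P := by
          rw [Real.log_mul (by positivity) hPposR.ne', Real.log_inv]
        rw [hlogmul] at hjen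
        have h2 := mul_le_mul_of_nonneg_left hjen hRpos.le
        rw [← Finset.mul_sum] at h2
        calc (P : ℝ) * Real.log P - (P : ℝ) * Real.log R
            = R * (R⁻¹ * (P : ℝ) * (-Real.log R + Real.log P)) := by
              field_simp; ring
          _ ≤ R * (R⁻¹ * ∑ k ∈ Finset.univ.filter (fun k => A i k = 1),
                (N i k : ℝ) * Real.log (N i k)) := h2
          _ = ∑ k ∈ Finset.univ.filter (fun k => A i k = 1),
                (N i k : ℝ) * Real.log (N i k) := by
              field_simp
      -- minors via IH
      have minor_ineq : ∀ i k, A i k = 1 →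
          (N i k : ℝ) * Real.log (N i k) ≤ (N i k : ℝ) * W i k := by
        intro i k hik
        have hm := ih (minor A i k) (fun a b => h01 _ _)
        rw [← card_fiber A i k hik] at hm
        have heq : ∑ x, g (rowOnes (minor A i k) x) = W i k := by
          simp_rw [rowOnes_minor]
          exact sum_swapsucc i (fun x => g (rowOnes A x - if A x k = 1 then 1 else 0))
        rw [heq] at hm
        exact hm
      -- regroup fibers
      have regroup : ∀ i, ∑ k ∈ Finset.univ.filter (fun k => A i k = 1),
          (N i k : ℝ) * W i k = ∑ σ ∈ pS A, W i (σ i) := by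
        intro i
        have hmap : ∀ σ ∈ pS A, (fun σ => σ i) σ ∈ Finset.univ.filter (fun k => A i k = 1) := by
          intro σ hσ
          simp only [Finset.mem_filter, Finset.mem_univ, true_and]
          exact hone σ hσ i
        have hfib := Finset.sum_fiberwise_of_maps_to' (s := pS A)
          (t := Finset.univ.filter (fun k => A i k = 1)) (g := fun σ => σ i) hmap (W i)
        rw [← hfib]
        refine Finset.sum_congr rfl fun k _ => ?_
        rw [Finset.sum_const, nsmul_eq_mul]
      -- per-row inequality
      have step1 : ∀ i, (P : ℝ) * Real.log P ≤
          (P : ℝ) * Real.log (rowOnes A i) + ∑ σ ∈ pS A, W i (σ i) := by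
        intro i
        have h1 := (jensen i).trans (Finset.sum_le_sum fun k hk =>
          minor_ineq i k (Finset.mem_filter.mp hk).2)
        rw [regroup i] at h1
        linarith
      -- sum over rows
      have total : (m + 1 : ℝ) * ((P : ℝ) * Real.log P) ≤
          (P : ℝ) * ∑ x, Real.log (rowOnes A x) + ∑ σ ∈ pS A, ∑ i, W i (σ i) := by
        calc (m + 1 : ℝ) * ((P : ℝ) * Real.log P)
            = ∑ _i : Fin (m + 1), (P : ℝ) * Real.log P := by
              rw [Finset.sum_const, Finset.card_univ, Fintype.card_fin, nsmul_eq_mul]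
              push_cast; ring
          _ ≤ ∑ i, ((P : ℝ) * Real.log (rowOnes A i) + ∑ σ ∈ pS A, W i (σ i)) :=
              Finset.sum_le_sum fun i _ => step1 i
          _ = (P : ℝ) * ∑ x, Real.log (rowOnes A x) + ∑ σ ∈ pS A, ∑ i, W i (σ i) := by
              rw [Finset.sum_add_distrib, ← Finset.mul_sum, Finset.sum_comm]
      -- the counting identity per σ
      have count : ∀ σ ∈ pS A, ∑ i, W i (σ i) =
          ∑ x, (Real.log (Nat.factorial (rowOnes A x - 1)) +
            ((m + 1 - rowOnes A x : ℕ) : ℝ) * g (rowOnes A x)) := by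
        intro σ hσ
        have swap2 : ∑ i, W i (σ i) = ∑ x, ∑ i ∈ Finset.univ.erase x,
            g (rowOnes A x - if A x (σ i) = 1 then 1 else 0) := by
          have F : Fin (m + 1) → Fin (m + 1) → ℝ :=
            fun x i => g (rowOnes A x - if A x (σ i) = 1 then 1 else 0)
          calc ∑ i, W i (σ i)
              = ∑ i, ((∑ x, g (rowOnes A x - if A x (σ i) = 1 then 1 else 0)) -
                  g (rowOnes A i - if A i (σ i) = 1 then 1 else 0)) := by
                refine Finset.sum_congr rfl fun i _ => ?_
                rw [hW]
                exact Finset.sum_erase_eq_sub (Finset.mem_univ i)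
            _ = (∑ i, ∑ x, g (rowOnes A x - if A x (σ i) = 1 then 1 else 0)) -
                  ∑ i, g (rowOnes A i - if A i (σ i) = 1 then 1 else 0) := by
                rw [Finset.sum_sub_distrib]
            _ = (∑ x, ∑ i, g (rowOnes A x - if A x (σ i) = 1 then 1 else 0)) -
                  ∑ x, g (rowOnes A x - if A x (σ x) = 1 then 1 else 0) := by
                rw [Finset.sum_comm]
            _ = ∑ x, ((∑ i, g (rowOnes A x - if A x (σ i) = 1 then 1 else 0)) -
                  g (rowOnes A x - if A x (σ x) = 1 then 1 else 0)) := by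
                rw [Finset.sum_sub_distrib]
            _ = ∑ x, ∑ i ∈ Finset.univ.erase x,
                  g (rowOnes A x - if A x (σ i) = 1 then 1 else 0) := by
                refine Finset.sum_congr rfl fun x _ => ?_
                exact (Finset.sum_erase_eq_sub (Finset.mem_univ x)).symm
        rw [swap2]
        refine Finset.sum_congr rfl fun x _ => ?_
        -- reindex i ↦ σ i
        have himg : (Finset.univ.erase x).image σ = Finset.univ.erase (σ x) := by
          ext c
          simp only [Finset.mem_image, Finset.mem_erase, Finset.mem_univ, and_true, true_and]
          constructor
          · rintro ⟨a, ha, rfl⟩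
            exact fun h => ha (σ.injective h)
          · intro hc
            exact ⟨σ.symm c, fun h => hc (by rw [← h, Equiv.apply_symm_apply]),
              Equiv.apply_symm_apply σ c⟩
        have hre : ∑ i ∈ Finset.univ.erase x,
            g (rowOnes A x - if A x (σ i) = 1 then 1 else 0) =
            ∑ c ∈ Finset.univ.erase (σ x),
            g (rowOnes A x - if A x c = 1 then 1 else 0) := by
          rw [← himg, Finset.sum_image (fun a _ b _ h => σ.injective h)]
        rw [hre]
        have hsplit : ∀ c, g (rowOnes A x - if A x c = 1 then 1 else 0) =
            if A x c = 1 then g (rowOnes A x - 1) else g (rowOnes A x) := by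
          intro c
          by_cases h : A x c = 1 <;> simp [h]
        simp_rw [hsplit]
        rw [Finset.sum_ite, Finset.sum_const, Finset.sum_const]
        have hc1 : ((Finset.univ.erase (σ x)).filter (fun c => A x c = 1)).card =
            rowOnes A x - 1 := by
          rw [Finset.filter_erase, Finset.card_erase_of_mem
            (by simp only [Finset.mem_filter, Finset.mem_univ, true_and]; exact hone σ hσ x)]
          rfl
        have hc2 : ((Finset.univ.erase (σ x)).filter (fun c => ¬A x c = 1)).card =
            m + 1 - rowOnes A x := by
          have hsum := Finset.card_filter_add_card_filter_not
            (s := Finset.univ.erase (σ x)) (p := fun c => A x c = 1)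
          have hcE : (Finset.univ.erase (σ x)).card = m := by
            rw [Finset.card_erase_of_mem (Finset.mem_univ _)]
            simp
          have h1 := hr1 x
          have h2 := hrn x
          omega
        rw [hc1, hc2, nsmul_eq_mul, nsmul_eq_mul, mul_g]
      -- final per-row algebra
      have final_eq : ∀ x : Fin (m + 1), Real.log (rowOnes A x) +
          (Real.log (Nat.factorial (rowOnes A x - 1)) +
            ((m + 1 - rowOnes A x : ℕ) : ℝ) * g (rowOnes A x)) =
          (m + 1 : ℝ) * g (rowOnes A x) := by
        intro x
        set r : ℕ := rowOnes A x with hrr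
        have h1 : 1 ≤ r := hr1 x
        have h2 : r ≤ m + 1 := hrn x
        have hrne : (r : ℝ) ≠ 0 := by exact_mod_cast Nat.pos_of_ne_zero (by omega) |>.ne'
        have hlog : Real.log r + Real.log (Nat.factorial (r - 1)) =
            Real.log (Nat.factorial r) := by
          rw [← Real.log_mul hrne (by exact_mod_cast (Nat.factorial_pos _).ne'),
            ← Nat.cast_mul, Nat.mul_factorial_pred (by omega)]
        have hcast : ((m + 1 - r : ℕ) : ℝ) = (m + 1 : ℝ) - r := by
          push_cast [h2]
          ring
        rw [hcast, ← add_assoc, hlog, g]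
        field_simp
        ring
      -- assemble
      have hconst : ∑ σ ∈ pS A, ∑ i, W i (σ i) =
          (P : ℝ) * ∑ x, (Real.log (Nat.factorial (rowOnes A x - 1)) +
            ((m + 1 - rowOnes A x : ℕ) : ℝ) * g (rowOnes A x)) := by
        rw [Finset.sum_congr rfl count, Finset.sum_const, nsmul_eq_mul]
      rw [hconst] at total
      have total2 : (m + 1 : ℝ) * ((P : ℝ) * Real.log P) ≤
          (m + 1 : ℝ) * ((P : ℝ) * ∑ x, g (rowOnes A x)) := by
        calc (m + 1 : ℝ) * ((P : ℝ) * Real.log P)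
            ≤ (P : ℝ) * ∑ x, Real.log (rowOnes A x) +
              (P : ℝ) * ∑ x, (Real.log (Nat.factorial (rowOnes A x - 1)) +
                ((m + 1 - rowOnes A x : ℕ) : ℝ) * g (rowOnes A x)) := total
          _ = (P : ℝ) * ∑ x, (Real.log (rowOnes A x) +
                (Real.log (Nat.factorial (rowOnes A x - 1)) +
                  ((m + 1 - rowOnes A x : ℕ) : ℝ) * g (rowOnes A x))) := by
              rw [← mul_add, ← Finset.sum_add_distrib]
          _ = (P : ℝ) * ∑ x, (m + 1 : ℝ) * g (rowOnes A x) := by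
              rw [Finset.sum_congr rfl fun x _ => final_eq x]
          _ = (m + 1 : ℝ) * ((P : ℝ) * ∑ x, g (rowOnes A x)) := by
              rw [← Finset.mul_sum]
              ring
      have hm1 : (0 : ℝ) < (m + 1 : ℝ) := by positivity
      exact le_of_mul_le_mul_left total2 hm1

end BregAux

/-- Let `A` be an `n×n` `(0,1)`-matrix with `per(A) ≠ 0` and let
`r i ≠ 0` be the number of ones in row `i`.  For every `α ∈ (0, 1)`:
`-ln_α (1/per A) ≤ Σ_i (1/r_i) Σ_{j=1}^{r_i} ln_α j`. -/
theorem neg_alphaLog_inv_permanent_le (n : ℕ) (A : Matrix (Fin n) (Fin n) ℝ)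
    (h01 : ∀ i j, A i j = 0 ∨ A i j = 1)
    (hper : matPerm A ≠ 0)
    (r : Fin n → ℕ)
    (hr : ∀ i, r i = (Finset.univ.filter (fun j => A i j = 1)).card)
    (hr0 : ∀ i, r i ≠ 0)
    (α : ℝ) (hα : α ∈ Set.Ioo (0 : ℝ) 1) :
    -alphaLog α (1 / matPerm A) ≤
      ∑ i, (1 / (r i : ℝ)) * ∑ j ∈ Finset.Icc 1 (r i), alphaLog α (j : ℝ) := by
  obtain ⟨hα0, hα1⟩ := hα
  have hαne : α ≠ 1 := ne_of_lt hα1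
  have hβ0 : (0 : ℝ) < 1 - α := by linarith
  have hPc := BregAux.matPerm_eq_card A h01
  set P : ℕ := (BregAux.pS A).card with hPdef
  have hP1 : 1 ≤ P := by
    rcases Nat.eq_zero_or_pos P with h | h
    · exact absurd (by rw [hPc, h]; simp) hper
    · exact h
  have hP1R : (1 : ℝ) ≤ (P : ℝ) := by exact_mod_cast hP1
  have hPpos : (0 : ℝ) < (P : ℝ) := by linarith
  -- Step 1: LHS ≤ log P
  have hL : -alphaLog α (1 / matPerm A) ≤ Real.log P := by
    rw [hPc, alphaLog, if_neg hαne]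
    have h1 : (1 / (P : ℝ)) ^ (1 - α) = (((P : ℝ) ^ (1 - α) : ℝ))⁻¹ := by
      rw [one_div, ← Real.inv_rpow hPpos.le]
    rw [h1]
    have hE : (P : ℝ) ^ (1 - α) = Real.exp ((1 - α) * Real.log P) := by
      rw [Real.rpow_def_of_pos hPpos, mul_comm]
    have hexp := Real.add_one_le_exp (-((1 - α) * Real.log P))
    rw [Real.exp_neg, ← hE] at hexp
    have hgoal : -((((P : ℝ) ^ (1 - α) : ℝ))⁻¹ - 1) / (1 - α) ≤ Real.log P := by
      rw [div_le_iff₀ hβ0]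
      nlinarith [hexp]
    rw [neg_div] at hgoal
    exact hgoal
  -- Step 2: Bregman
  have hBr : Real.log P ≤ ∑ i, BregAux.g (r i) := by
    have h := BregAux.bregman n A h01
    have hro : ∀ i, BregAux.rowOnes A i = r i := fun i => (hr i).symm
    simp_rw [hro] at h
    have := (mul_le_mul_iff_right₀ hPpos).mp h
    exact this
  -- Step 3: RHS bound
  have hR : ∑ i, BregAux.g (r i) ≤
      ∑ i, (1 / (r i : ℝ)) * ∑ j ∈ Finset.Icc 1 (r i), alphaLog α (j : ℝ) := by
    refine Finset.sum_le_sum fun i _ => ?_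
    have hri : (0 : ℝ) < (r i : ℝ) := by exact_mod_cast Nat.pos_of_ne_zero (hr0 i)
    have inner : Real.log (Nat.factorial (r i)) ≤
        ∑ j ∈ Finset.Icc 1 (r i), alphaLog α (j : ℝ) := by
      have hfact : ((Nat.factorial (r i) : ℕ) : ℝ) = ∏ j ∈ Finset.Icc 1 (r i), (j : ℝ) := by
        rw [← Nat.cast_prod]
        congr 1
        rw [← Finset.Ico_add_one_right_eq_Icc, Finset.prod_Ico_id_eq_factorial]
      have hlog : Real.log (Nat.factorial (r i)) = ∑ j ∈ Finset.Icc 1 (r i), Real.log j := by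
        rw [hfact, Real.log_prod]
        intro j hj
        have : 1 ≤ j := (Finset.mem_Icc.mp hj).1
        exact_mod_cast Nat.pos_of_ne_zero (by omega) |>.ne'
      rw [hlog]
      refine Finset.sum_le_sum fun j hj => ?_
      have hj1 : 1 ≤ j := (Finset.mem_Icc.mp hj).1
      have hjR : (1 : ℝ) ≤ (j : ℝ) := by exact_mod_cast hj1
      rw [alphaLog, if_neg hαne, le_div_iff₀ hβ0]
      have hEj : (j : ℝ) ^ (1 - α) = Real.exp ((1 - α) * Real.log j) := by
        rw [Real.rpow_def_of_pos (by linarith), mul_comm]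
      have := Real.add_one_le_exp ((1 - α) * Real.log j)
      nlinarith [this, hEj]
    rw [BregAux.g, div_eq_inv_mul, ← one_div]
    exact mul_le_mul_of_nonneg_left inner (by positivity)
  linarith
end
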